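/- arXiv:2404.06145 — 6 statements merged into one kernel-verified Lean document; each statement's English description precedes it below -/
import Mathlib

section
/- Let ψ(s) = γs + (σ²/2)s² + ∫_{(0,∞)} (e^{−sz} − 1 + sz·1_{z≤1}) ν(dz) be the Laplace exponent of a spectrally positive Lévy process, and suppose there is p ∈ (0,∞) with ψ(p) = 0, ψ(s) < 0 for s ∈ (0,p), and ψ(s) > 0 for s > p. Let c ∈ ℝ and let κ : [0,∞) → [0,∞) be measurable and bounded, and suppose that ∫_0^∞ e^{−sy} κ(y) dy = c/(s−p) − 1/ψ(s) for every s > p. Then the same identity ∫_0^∞ e^{−sy} κ(y) dy = c/(s−p) − 1/ψ(s) holds for every s ∈ (0,p), and consequently (−ψ(s)) · ∫_0^∞ e^{−sy} κ(y) dy → 1 as s → 0+, i.e. ∫_0^∞ e^{−sy} κ(y) dy ∼ −1/ψ(s) as s → 0+. -/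
open MeasureTheory Filter Set Topology


lemma norm_cexp_sub_one_le (w : ℂ) : ‖Complex.exp w - 1‖ ≤ ‖w‖ * Real.exp ‖w‖ := by
  have h := Convex.norm_image_sub_le_of_norm_hasDerivWithin_le (𝕜 := ℂ)
    (f := Complex.exp) (f' := Complex.exp) (s := Metric.closedBall (0:ℂ) ‖w‖)
    (C := Real.exp ‖w‖)
    (fun z _ => (Complex.hasDerivAt_exp z).hasDerivWithinAt)
    (fun z hz => by
      rw [show ‖Complex.exp z‖ = Real.exp z.re from Complex.norm_exp z]
      exact Real.exp_le_exp.2 ((Complex.re_le_norm z).trans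
        (by simpa using mem_closedBall_zero_iff.1 hz)))
    (convex_closedBall _ _) (Metric.mem_closedBall_self (norm_nonneg w))
    (mem_closedBall_zero_iff.2 le_rfl)
  simpa [Complex.exp_zero, mul_comm] using h

lemma norm_cexp_sub_one_sub_le (w : ℂ) :
    ‖Complex.exp w - 1 - w‖ ≤ ‖w‖ ^ 2 * Real.exp ‖w‖ := by
  have h := Convex.norm_image_sub_le_of_norm_hasDerivWithin_le (𝕜 := ℂ)
    (f := fun z => Complex.exp z - 1 - z) (f' := fun z => Complex.exp z - 1)
    (s := Metric.closedBall (0:ℂ) ‖w‖) (C := ‖w‖ * Real.exp ‖w‖)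
    (fun z _ => (((Complex.hasDerivAt_exp z).sub_const 1).sub (hasDerivAt_id z)).hasDerivWithinAt)
    (fun z hz => by
      have hz' : ‖z‖ ≤ ‖w‖ := by simpa using mem_closedBall_zero_iff.1 hz
      calc ‖Complex.exp z - 1‖ ≤ ‖z‖ * Real.exp ‖z‖ := norm_cexp_sub_one_le z
        _ ≤ ‖w‖ * Real.exp ‖w‖ :=
          mul_le_mul hz' (Real.exp_le_exp.2 hz') (Real.exp_nonneg _) (norm_nonneg _))
    (convex_closedBall _ _) (Metric.mem_closedBall_self (norm_nonneg w))
    (mem_closedBall_zero_iff.2 le_rfl)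
  calc ‖Complex.exp w - 1 - w‖ = ‖(Complex.exp w - 1 - w) - (Complex.exp 0 - 1 - 0)‖ := by
        simp
    _ ≤ ‖w‖ * Real.exp ‖w‖ * ‖w - 0‖ := h
    _ = ‖w‖ ^ 2 * Real.exp ‖w‖ := by rw [sub_zero, sq]; ring

lemma laplace_diff (κ : ℝ → ℝ) (hκ_meas : Measurable κ) (M : ℝ)
    (hM : ∀ y, 0 ≤ y → |κ y| ≤ M) {z₀ : ℂ} (hz₀ : 0 < z₀.re) :
    DifferentiableAt ℂ (fun z => ∫ y in Ioi (0:ℝ), Complex.exp (-(z * y)) * (κ y : ℂ)) z₀ := by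
  set a : ℝ := z₀.re / 2 with ha_def
  have ha : 0 < a := by positivity
  have hM0 : 0 ≤ M := le_trans (abs_nonneg _) (hM 0 le_rfl)
  have key := hasDerivAt_integral_of_dominated_loc_of_deriv_le
    (F := fun (z : ℂ) (y : ℝ) => Complex.exp (-(z * y)) * (κ y : ℂ))
    (F' := fun (z : ℂ) (y : ℝ) => Complex.exp (-(z * y)) * (-(y : ℂ)) * (κ y : ℂ))
    (μ := volume.restrict (Ioi (0:ℝ))) (x₀ := z₀)
    (bound := fun y => (2 * M / a) * Real.exp (-(a / 2) * y)) (s := Metric.ball z₀ a) (Metric.ball_mem_nhds z₀ ha)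
    ?meas ?int ?meas' ?bound ?boundint ?deriv
  · exact key.2.differentiableAt
  case meas =>
    refine Eventually.of_forall fun z => Measurable.aestronglyMeasurable ?_
    exact ((Complex.continuous_exp.comp
      ((continuous_const.mul Complex.continuous_ofReal).neg)).measurable.mul
      (Complex.measurable_ofReal.comp hκ_meas))
  case meas' =>
    refine Measurable.aestronglyMeasurable ?_
    exact (((Complex.continuous_exp.comp
      ((continuous_const.mul Complex.continuous_ofReal).neg)).mul
      (Complex.continuous_ofReal.neg)).measurable.mul
      (Complex.measurable_ofReal.comp hκ_meas))
  case int =>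
    refine Integrable.mono' ((exp_neg_integrableOn_Ioi 0 ha).const_mul M)
      (Measurable.aestronglyMeasurable (((Complex.continuous_exp.comp
        ((continuous_const.mul Complex.continuous_ofReal).neg)).measurable.mul
        (Complex.measurable_ofReal.comp hκ_meas)))) ?_
    filter_upwards [ae_restrict_mem measurableSet_Ioi] with y hy
    have hy0 : (0:ℝ) ≤ y := le_of_lt hy
    have h1 : ‖Complex.exp (-(z₀ * y)) * (κ y : ℂ)‖ = Real.exp (-(z₀.re * y)) * |κ y| := by
      simp [norm_mul, Complex.norm_exp,
        Complex.mul_re]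
    rw [h1]
    have h2 : Real.exp (-(z₀.re * y)) ≤ Real.exp (-(a * y)) := by
      apply Real.exp_le_exp.2
      have : a ≤ z₀.re := by rw [ha_def]; linarith
      nlinarith
    calc Real.exp (-(z₀.re * y)) * |κ y| ≤ Real.exp (-(a * y)) * M :=
          mul_le_mul h2 (hM y hy0) (abs_nonneg _) (Real.exp_nonneg _)
      _ = M * Real.exp (-a * y) := by rw [neg_mul, mul_comm]
  case bound =>
    filter_upwards [ae_restrict_mem measurableSet_Ioi] with y hy z hz
    have hy0 : (0:ℝ) ≤ y := le_of_lt hy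
    have hza : a ≤ z.re := by
      have := Complex.abs_re_le_norm (z - z₀)
      have h' : ‖z - z₀‖ < a := by
        simpa [Complex.dist_eq] using (Metric.mem_ball.1 hz)
      have : |z.re - z₀.re| < a := by
        simpa [Complex.sub_re] using lt_of_le_of_lt this h'
      have := abs_lt.1 this
      rw [ha_def]; linarith [this.1]
    have h1 : ‖Complex.exp (-(z * y)) * (-(y:ℂ)) * (κ y : ℂ)‖
        = Real.exp (-(z.re * y)) * (y * |κ y|) := by
      simp [norm_mul, Complex.norm_exp,
        Complex.mul_re, abs_of_nonneg hy0]
      ring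
    rw [h1]
    have h2 : Real.exp (-(z.re * y)) ≤ Real.exp (-(a * y)) := by
      apply Real.exp_le_exp.2; nlinarith
    have h3 : y ≤ 2 / a * Real.exp (a / 2 * y) := by
      have hexp := Real.add_one_le_exp (a / 2 * y)
      have h' : a / 2 * y ≤ Real.exp (a / 2 * y) := by linarith
      calc y = 2 / a * (a / 2 * y) := by field_simp
        _ ≤ 2 / a * Real.exp (a / 2 * y) :=
            mul_le_mul_of_nonneg_left h' (by positivity)
    have h4 : Real.exp (-(a * y)) * Real.exp (a / 2 * y) = Real.exp (-(a / 2 * y)) := by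
      rw [← Real.exp_add]; ring_nf
    have h5 : y * |κ y| ≤ (2 / a * Real.exp (a / 2 * y)) * M :=
      mul_le_mul h3 (hM y hy0) (abs_nonneg _) (by positivity)
    have h6 : Real.exp (-(z.re * y)) * (y * |κ y|)
        ≤ Real.exp (-(a * y)) * ((2 / a * Real.exp (a / 2 * y)) * M) :=
      mul_le_mul h2 h5 (by positivity) (Real.exp_nonneg _)
    have h7 : Real.exp (-(a * y)) * ((2 / a * Real.exp (a / 2 * y)) * M)
        = 2 * M / a * Real.exp (-(a / 2) * y) := by
      rw [neg_mul, ← h4]; ring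
    rw [← h7]; exact h6
  case boundint =>
    exact (exp_neg_integrableOn_Ioi 0 (by positivity : (0:ℝ) < a / 2)).const_mul _
  case deriv =>
    refine Eventually.of_forall fun y => fun z _ => ?_
    have h1 : HasDerivAt (fun z : ℂ => -(z * (y:ℂ))) (-(y:ℂ)) z := by
      exact (hasDerivAt_mul_const (y:ℂ)).neg
    exact (h1.cexp).mul_const _

lemma min_one_sq_integrable (ν : Measure ℝ)
    (hν_int : ∫⁻ z in Ioi 0, ENNReal.ofReal (min 1 (z ^ 2)) ∂ν < ⊤) :
    Integrable (fun u => min 1 (u ^ 2)) (ν.restrict (Ioi 0)) := by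
  constructor
  · exact (continuous_const.min (continuous_pow 2)).measurable.aestronglyMeasurable
  · rw [hasFiniteIntegral_iff_norm]
    calc ∫⁻ u, ENNReal.ofReal ‖min 1 (u ^ 2)‖ ∂(ν.restrict (Ioi 0))
        = ∫⁻ u in Ioi 0, ENNReal.ofReal (min 1 (u ^ 2)) ∂ν := by
          refine lintegral_congr fun u => ?_
          rw [Real.norm_eq_abs, abs_of_nonneg (le_min zero_le_one (sq_nonneg u))]
      _ < ⊤ := hν_int

lemma levy_integrand_meas (z : ℂ) :
    Measurable (fun u : ℝ => Complex.exp (-(z * u)) - 1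
      + z * (u * (if u ≤ 1 then (1:ℂ) else 0))) := by
  have hχ : Measurable (fun u : ℝ => (if u ≤ 1 then (1:ℂ) else 0)) :=
    Measurable.ite measurableSet_Iic measurable_const measurable_const
  exact (((Complex.continuous_exp.comp
    ((continuous_const.mul Complex.continuous_ofReal).neg)).measurable.sub
    measurable_const).add
    ((measurable_const.mul (Complex.measurable_ofReal.mul hχ))))

lemma levy_diff (ν : Measure ℝ)
    (hν_int : ∫⁻ z in Ioi 0, ENNReal.ofReal (min 1 (z ^ 2)) ∂ν < ⊤)
    {z₀ : ℂ} (hz₀ : 0 < z₀.re) :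
    DifferentiableAt ℂ (fun z => ∫ u in Ioi (0:ℝ),
      (Complex.exp (-(z * u)) - 1 + z * (u * (if u ≤ 1 then (1:ℂ) else 0))) ∂ν) z₀ := by
  set a : ℝ := z₀.re / 2 with ha_def
  have ha : 0 < a := by positivity
  set R : ℝ := ‖z₀‖ + a with hR_def
  have hR0 : 0 < R := by positivity
  set C : ℝ := max (R * Real.exp R) (2 / a) with hC_def
  have hC0 : 0 ≤ C := le_trans (by positivity) (le_max_right _ _)
  have hmin := min_one_sq_integrable ν hν_int
  have key := hasDerivAt_integral_of_dominated_loc_of_deriv_le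
    (F := fun (z : ℂ) (u : ℝ) => Complex.exp (-(z * u)) - 1
      + z * (u * (if u ≤ 1 then (1:ℂ) else 0)))
    (F' := fun (z : ℂ) (u : ℝ) => Complex.exp (-(z * u)) * (-(u : ℂ))
      + (u : ℂ) * (if u ≤ 1 then (1:ℂ) else 0))
    (μ := ν.restrict (Ioi (0:ℝ))) (x₀ := z₀)
    (bound := fun u => C * min 1 (u ^ 2)) (s := Metric.ball z₀ a) (Metric.ball_mem_nhds z₀ ha)
    ?meas ?int ?meas' ?bound ?boundint ?deriv
  · exact key.2.differentiableAt
  case meas =>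
    exact Eventually.of_forall fun z => (levy_integrand_meas z).aestronglyMeasurable
  case meas' =>
    have hχ : Measurable (fun u : ℝ => (if u ≤ 1 then (1:ℂ) else 0)) :=
      Measurable.ite measurableSet_Iic measurable_const measurable_const
    exact (((Complex.continuous_exp.comp
      ((continuous_const.mul Complex.continuous_ofReal).neg)).measurable.mul
      Complex.measurable_ofReal.neg).add
      (Complex.measurable_ofReal.mul hχ)).aestronglyMeasurable
  case int =>
    set C₀ : ℝ := max (‖z₀‖ ^ 2 * Real.exp (‖z₀‖)) 2 with hC₀_def
    refine Integrable.mono' (hmin.const_mul C₀)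
      (levy_integrand_meas z₀).aestronglyMeasurable ?_
    filter_upwards [ae_restrict_mem measurableSet_Ioi] with u hu
    have hu0 : (0:ℝ) < u := hu
    by_cases h1 : u ≤ 1
    · have hmin1 : min 1 (u ^ 2) = u ^ 2 :=
        min_eq_right (by nlinarith)
      rw [if_pos h1, hmin1]
      have hw : Complex.exp (-(z₀ * u)) - 1 + z₀ * (↑u * 1)
          = Complex.exp (-(z₀ * ↑u)) - 1 - -(z₀ * ↑u) := by ring
      rw [hw]
      have := norm_cexp_sub_one_sub_le (-(z₀ * u))
      have hnw : ‖-(z₀ * (u:ℂ))‖ = ‖z₀‖ * u := by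
        simp [map_mul, abs_of_nonneg hu0.le]
      rw [hnw] at this
      calc ‖Complex.exp (-(z₀ * ↑u)) - 1 - -(z₀ * ↑u)‖
          ≤ (‖z₀‖ * u) ^ 2 * Real.exp (‖z₀‖ * u) := this
        _ ≤ ‖z₀‖ ^ 2 * Real.exp (‖z₀‖) * u ^ 2 := by
            have he : Real.exp (‖z₀‖ * u) ≤ Real.exp (‖z₀‖) := by
              apply Real.exp_le_exp.2
              nlinarith [norm_nonneg z₀]
            have h2 : (‖z₀‖ * u) ^ 2 = ‖z₀‖ ^ 2 * u ^ 2 := by ring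
            rw [h2]
            nlinarith [sq_nonneg (‖z₀‖), sq_nonneg u, Real.exp_nonneg (‖z₀‖ * u)]
        _ ≤ C₀ * u ^ 2 := by
            apply mul_le_mul_of_nonneg_right (le_max_left _ _) (sq_nonneg u)
    · have hmin1 : min 1 (u ^ 2) = 1 := min_eq_left (by nlinarith)
      rw [if_neg h1, hmin1, mul_one]
      have : Complex.exp (-(z₀ * u)) - 1 + z₀ * (↑u * 0) = Complex.exp (-(z₀ * u)) - 1 := by
        ring
      rw [this]
      have hre : (-(z₀ * (u:ℂ))).re = -(z₀.re * u) := by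
        simp [Complex.mul_re]
      have hnorm : ‖Complex.exp (-(z₀ * (u:ℂ)))‖ = Real.exp (-(z₀.re * u)) := by
        rw [Complex.norm_exp, hre]
      calc ‖Complex.exp (-(z₀ * u)) - 1‖ ≤ ‖Complex.exp (-(z₀ * (u:ℂ)))‖ + ‖(1:ℂ)‖ :=
            norm_sub_le _ _
        _ ≤ 1 + 1 := by
            rw [hnorm]
            gcongr
            · exact Real.exp_le_one_iff.2 (by nlinarith)
            · simp
        _ ≤ C₀ := le_trans (by norm_num) (le_max_right _ _)
  case bound =>
    filter_upwards [ae_restrict_mem measurableSet_Ioi] with u hu z hz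
    have hu0 : (0:ℝ) < u := hu
    have hza : a ≤ z.re := by
      have h' : ‖z - z₀‖ < a := by
        simpa [Complex.dist_eq] using (Metric.mem_ball.1 hz)
      have habs := (abs_lt.1 (lt_of_le_of_lt (Complex.abs_re_le_norm (z - z₀))
        (by simpa [Complex.sub_re] using h'))).1
      rw [Complex.sub_re] at habs
      rw [ha_def]; linarith
    have hzR : ‖z‖ ≤ R := by
      have h' : ‖z - z₀‖ < a := by
        simpa [Complex.dist_eq] using (Metric.mem_ball.1 hz)
      calc ‖z‖ = ‖z₀ + (z - z₀)‖ := by ring_nf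
        _ ≤ ‖z₀‖ + ‖z - z₀‖ := norm_add_le _ _
        _ ≤ R := by rw [hR_def]; linarith
    by_cases h1 : u ≤ 1
    · have hmin1 : min 1 (u ^ 2) = u ^ 2 := min_eq_right (by nlinarith)
      rw [if_pos h1, hmin1]
      have hw : Complex.exp (-(z * u)) * (-(u:ℂ)) + (u:ℂ) * 1
          = (u:ℂ) * (1 - Complex.exp (-(z * u))) := by ring
      rw [hw, norm_mul]
      have hnu : ‖(u:ℂ)‖ = u := by
        simp [abs_of_nonneg hu0.le]
      have h2 : ‖(1:ℂ) - Complex.exp (-(z * u))‖ = ‖Complex.exp (-(z * u)) - 1‖ :=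
        norm_sub_rev _ _
      rw [hnu, h2]
      have hb := norm_cexp_sub_one_le (-(z * u))
      have hnw : ‖-(z * (u:ℂ))‖ = ‖z‖ * u := by
        simp [map_mul, abs_of_nonneg hu0.le]
      rw [hnw] at hb
      have hwR : ‖z‖ * u ≤ R := by nlinarith [norm_nonneg z]
      have hb2 : ‖z‖ * u * Real.exp (‖z‖ * u)
          ≤ (R * u) * Real.exp R := by
        have : ‖z‖ * u ≤ R * u := by nlinarith
        exact mul_le_mul this (Real.exp_le_exp.2 hwR) (Real.exp_nonneg _)
          (by positivity)
      calc u * ‖Complex.exp (-(z * u)) - 1‖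
          ≤ u * ((R * u) * Real.exp R) := by
            apply mul_le_mul_of_nonneg_left (le_trans hb hb2) hu0.le
        _ = (R * Real.exp R) * u ^ 2 := by ring
        _ ≤ C * u ^ 2 := mul_le_mul_of_nonneg_right (le_max_left _ _) (sq_nonneg u)
    · have hmin1 : min 1 (u ^ 2) = 1 := min_eq_left (by nlinarith)
      rw [if_neg h1, hmin1, mul_one, mul_zero, add_zero]
      have hre : (-(z * (u:ℂ))).re = -(z.re * u) := by simp [Complex.mul_re]
      have hnorm : ‖Complex.exp (-(z * (u:ℂ))) * (-(u:ℂ))‖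
          = Real.exp (-(z.re * u)) * u := by
        rw [norm_mul, Complex.norm_exp, hre]
        simp [abs_of_nonneg hu0.le]
      rw [hnorm]
      have hexp := Real.add_one_le_exp (a / 2 * u)
      have h' : a / 2 * u ≤ Real.exp (a / 2 * u) := by linarith
      have h3 : u ≤ 2 / a * Real.exp (a / 2 * u) := by
        calc u = 2 / a * (a / 2 * u) := by field_simp
          _ ≤ 2 / a * Real.exp (a / 2 * u) :=
              mul_le_mul_of_nonneg_left h' (by positivity)
      have h4 : Real.exp (-(z.re * u)) ≤ Real.exp (-(a * u)) :=
        Real.exp_le_exp.2 (by nlinarith)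
      have h5 : Real.exp (-(a * u)) * Real.exp (a / 2 * u) = Real.exp (-(a / 2 * u)) := by
        rw [← Real.exp_add]; ring_nf
      calc Real.exp (-(z.re * u)) * u
          ≤ Real.exp (-(a * u)) * (2 / a * Real.exp (a / 2 * u)) :=
            mul_le_mul h4 h3 hu0.le (Real.exp_nonneg _)
        _ = 2 / a * Real.exp (-(a / 2 * u)) := by rw [← h5]; ring
        _ ≤ 2 / a * 1 := by
            apply mul_le_mul_of_nonneg_left _ (by positivity)
            exact Real.exp_le_one_iff.2 (by nlinarith)
        _ ≤ C := by rw [mul_one]; exact le_max_right _ _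
  case boundint => exact hmin.const_mul C
  case deriv =>
    refine Eventually.of_forall fun u => fun z _ => ?_
    have h1 : HasDerivAt (fun z : ℂ => -(z * (u:ℂ))) (-(u:ℂ)) z := by
      exact (hasDerivAt_mul_const (u:ℂ)).neg
    have h2 := (h1.cexp.sub_const 1).add
      (hasDerivAt_mul_const ((u:ℂ) * (if u ≤ 1 then (1:ℂ) else 0)))
    simpa [mul_comm, Pi.add_def] using h2

lemma ofReal_integral'' {X : Type*} [MeasurableSpace X] (μ : Measure X) (f : X → ℝ) :
    ((∫ x, f x ∂μ : ℝ) : ℂ) = ∫ x, (f x : ℂ) ∂μ := (integral_ofReal (𝕜 := ℂ)).symm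


/-- Let `ψ` be the Laplace exponent of a spectrally positive Lévy process with a
root `p ∈ (0,∞)` (negative on `(0,p)`, positive on `(p,∞)`). If a bounded nonnegative measurable
`κ` satisfies `∫_0^∞ e^{-sy} κ(y) dy = c/(s-p) - 1/ψ(s)` for all `s > p`, then the same identity
holds for all `s ∈ (0,p)`, and `∫_0^∞ e^{-sy} κ(y) dy ∼ -1/ψ(s)` as `s → 0+`. -/
theorem stmt_3 (b σ : ℝ) (hσ : 0 ≤ σ) (ν : Measure ℝ)
    (hν_supp : ν (Iic 0) = 0)
    (hν_int : ∫⁻ z in Ioi 0, ENNReal.ofReal (min 1 (z ^ 2)) ∂ν < ⊤)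
    (ψ : ℝ → ℝ)
    (hψ : ∀ s, 0 ≤ s → ψ s = b * s + σ ^ 2 / 2 * s ^ 2 +
      ∫ z in Ioi 0, (Real.exp (-(s * z)) - 1 + s * z * (if z ≤ 1 then 1 else 0)) ∂ν)
    (p : ℝ) (hp : 0 < p) (hψp : ψ p = 0)
    (hψ_neg : ∀ s ∈ Ioo 0 p, ψ s < 0) (hψ_pos : ∀ s, p < s → 0 < ψ s)
    (c : ℝ) (κ : ℝ → ℝ) (hκ_meas : Measurable κ)
    (hκ_nonneg : ∀ y, 0 ≤ y → 0 ≤ κ y)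
    (hκ_bdd : ∃ M : ℝ, ∀ y, 0 ≤ y → κ y ≤ M)
    (hid : ∀ s, p < s →
      ∫ y in Ioi 0, Real.exp (-(s * y)) * κ y = c / (s - p) - 1 / ψ s) :
    (∀ s ∈ Ioo 0 p,
      ∫ y in Ioi 0, Real.exp (-(s * y)) * κ y = c / (s - p) - 1 / ψ s) ∧
    Tendsto (fun s => -ψ s * ∫ y in Ioi 0, Real.exp (-(s * y)) * κ y)
      (𝓝[>] 0) (𝓝 1) := by
  obtain ⟨M, hM0⟩ := hκ_bdd
  have hM : ∀ y, 0 ≤ y → |κ y| ≤ M := fun y hy => by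
    rw [abs_of_nonneg (hκ_nonneg y hy)]; exact hM0 y hy
  set U : Set ℂ := {z : ℂ | 0 < z.re} with hU_def
  have hUopen : IsOpen U := isOpen_lt continuous_const Complex.continuous_re
  have hUconv : Convex ℝ U := convex_halfSpace_re_gt 0
  set Fc : ℂ → ℂ := fun z => ∫ y in Ioi (0:ℝ), Complex.exp (-(z * y)) * (κ y : ℂ)
    with hFc_def
  set ψc : ℂ → ℂ := fun z => (b:ℂ) * z + (σ:ℂ) ^ 2 / 2 * z ^ 2 +
    ∫ u in Ioi (0:ℝ),
      (Complex.exp (-(z * u)) - 1 + z * (u * (if u ≤ 1 then (1:ℂ) else 0))) ∂ν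
    with hψc_def
  have hFc_real : ∀ s : ℝ,
      Fc (s:ℂ) = ((∫ y in Ioi 0, Real.exp (-(s * y)) * κ y : ℝ) : ℂ) := by
    intro s
    rw [hFc_def]
    simp only
    rw [ofReal_integral'']
    refine integral_congr_ae (Eventually.of_forall fun y => ?_)
    push_cast [Complex.ofReal_exp]
    ring
  have hψc_real : ∀ s : ℝ, 0 ≤ s → ψc (s:ℂ) = ((ψ s : ℝ) : ℂ) := by
    intro s hs
    have hint : (∫ u in Ioi (0:ℝ),
        (Complex.exp (-((s:ℂ) * u)) - 1 + (s:ℂ) * (u * (if u ≤ 1 then (1:ℂ) else 0))) ∂ν)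
        = ((∫ u in Ioi 0,
            (Real.exp (-(s * u)) - 1 + s * u * (if u ≤ 1 then 1 else 0)) ∂ν : ℝ) : ℂ) := by
      rw [ofReal_integral'']
      refine integral_congr_ae (Eventually.of_forall fun u => ?_)
      by_cases h1 : u ≤ 1 <;> simp [h1] <;> push_cast [Complex.ofReal_exp] <;> ring
    rw [hψc_def]
    simp only
    rw [hint, hψ s hs]
    push_cast
    ring
  have hψc_diff : ∀ z ∈ U, DifferentiableAt ℂ ψc z := by
    intro z hz
    have hpoly : DifferentiableAt ℂ (fun z : ℂ => (b:ℂ) * z + (σ:ℂ) ^ 2 / 2 * z ^ 2) z := by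
      fun_prop
    exact hpoly.add (levy_diff ν hν_int hz)
  have hFc_diff : ∀ z ∈ U, DifferentiableAt ℂ Fc z := fun z hz =>
    laplace_diff κ hκ_meas M hM hz
  set H : ℂ → ℂ := fun z =>
    (z - (p:ℂ)) * ψc z * Fc z - ((c:ℂ) * ψc z - (z - (p:ℂ))) with hH_def
  have hH_diff : DifferentiableOn ℂ H U := by
    intro z hz
    exact ((((differentiableAt_id.sub (differentiableAt_const _)).mul
      (hψc_diff z hz)).mul (hFc_diff z hz)).sub
      (((differentiableAt_const _).mul (hψc_diff z hz)).sub
        (differentiableAt_id.sub (differentiableAt_const _)))).differentiableWithinAt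
  have hH_an : AnalyticOnNhd ℂ H U := hH_diff.analyticOnNhd hUopen
  have hHreal : ∀ t : ℝ, p < t → H (t:ℂ) = 0 := by
    intro t ht
    have ht0 : (0:ℝ) ≤ t := le_of_lt (lt_trans hp ht)
    have hψt : ψ t ≠ 0 := (hψ_pos t ht).ne'
    have htp : t - p ≠ 0 := sub_ne_zero.2 (ne_of_gt ht)
    have hreal : (t - p) * ψ t * (c / (t - p) - 1 / ψ t) - (c * ψ t - (t - p)) = 0 := by
      field_simp
      ring
    rw [hH_def]
    simp only
    rw [hψc_real t ht0, hFc_real t, hid t ht]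
    have h2 := congrArg (fun x : ℝ => (x : ℂ)) hreal
    push_cast at h2 ⊢
    linear_combination h2
  have hz₁mem : (((p + 1 : ℝ)) : ℂ) ∈ U := by
    simp only [hU_def, mem_setOf_eq, Complex.ofReal_re]
    linarith
  have hfreq : ∃ᶠ z in 𝓝[≠] (((p + 1 : ℝ)) : ℂ), H z = 0 := by
    have hseq : Tendsto (fun n : ℕ => (((p + 1 + 1 / (n + 1) : ℝ)) : ℂ)) atTop
        (𝓝[≠] (((p + 1 : ℝ)) : ℂ)) := by
      rw [tendsto_nhdsWithin_iff]
      constructor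
      · have h1 : Tendsto (fun n : ℕ => (p + 1 + 1 / (n + 1) : ℝ)) atTop (𝓝 (p + 1)) := by
          have h1 := tendsto_one_div_add_atTop_nhds_zero_nat (𝕜 := ℝ)
          have h2 : Tendsto (fun _ : ℕ => (p + 1 : ℝ)) atTop (𝓝 (p + 1)) :=
            tendsto_const_nhds
          simpa using h2.add h1
        exact (Complex.continuous_ofReal.tendsto _).comp h1
      · refine Eventually.of_forall fun n => ?_
        simp only [mem_compl_iff, mem_singleton_iff]
        intro hcontra
        have := Complex.ofReal_injective hcontra
        have hpos : (0:ℝ) < 1 / (n + 1 : ℝ) := by positivity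
        linarith
    refine hseq.frequently (Frequently.of_forall fun n => hHreal _ ?_)
    have hpos : (0:ℝ) < 1 / (n + 1 : ℝ) := by positivity
    linarith
  have hEq : EqOn H 0 U :=
    hH_an.eqOn_zero_of_preconnected_of_frequently_eq_zero hUconv.isPreconnected
      hz₁mem hfreq
  have part1 : ∀ s ∈ Ioo 0 p,
      ∫ y in Ioi 0, Real.exp (-(s * y)) * κ y = c / (s - p) - 1 / ψ s := by
    intro s hs
    have hsU : ((s:ℝ) : ℂ) ∈ U := by
      simp only [hU_def, mem_setOf_eq, Complex.ofReal_re]; exact hs.1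
    have h0 : H (s:ℂ) = 0 := hEq hsU
    rw [hH_def] at h0
    simp only at h0
    rw [hψc_real s hs.1.le, hFc_real s] at h0
    set F := ∫ y in Ioi 0, Real.exp (-(s * y)) * κ y with hF_def
    have hcast : (((s - p) * ψ s * F - (c * ψ s - (s - p)) : ℝ) : ℂ) = 0 := by
      push_cast
      linear_combination h0
    have hre : (s - p) * ψ s * F - (c * ψ s - (s - p)) = 0 :=
      Complex.ofReal_eq_zero.1 hcast
    have hsp : s - p ≠ 0 := sub_ne_zero.2 (ne_of_lt hs.2)
    have hψs : ψ s ≠ 0 := (hψ_neg s hs).ne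
    rw [div_sub_div c 1 hsp hψs, eq_div_iff (mul_ne_zero hsp hψs)]
    linear_combination hre
  refine ⟨part1, ?_⟩
  -- Part 2
  have hψ0 : Tendsto ψ (𝓝[>] (0:ℝ)) (𝓝 0) := by
    have hmin := min_one_sq_integrable ν hν_int
    have hI : Tendsto (fun s : ℝ => ∫ z in Ioi 0,
        (Real.exp (-(s * z)) - 1 + s * z * (if z ≤ 1 then 1 else 0)) ∂ν)
        (𝓝[>] (0:ℝ)) (𝓝 0) := by
      have h := tendsto_integral_filter_of_dominated_convergence
        (μ := ν.restrict (Ioi (0:ℝ))) (l := 𝓝[>] (0:ℝ))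
        (F := fun (s : ℝ) (z : ℝ) =>
          Real.exp (-(s * z)) - 1 + s * z * (if z ≤ 1 then 1 else 0))
        (f := fun _ => (0:ℝ)) (bound := fun u => 2 * min 1 (u ^ 2))
        ?meas ?bd ?bint ?lim
      · simpa using h
      case meas =>
        refine Eventually.of_forall fun s => Measurable.aestronglyMeasurable ?_
        have hχ : Measurable (fun u : ℝ => (if u ≤ 1 then (1:ℝ) else 0)) :=
          Measurable.ite measurableSet_Iic measurable_const measurable_const
        exact ((Real.continuous_exp.comp
          (continuous_const.mul continuous_id).neg).measurable.sub
          measurable_const).add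
          ((measurable_const.mul measurable_id).mul hχ)
      case bd =>
        filter_upwards [Ioc_mem_nhdsGT_of_mem (by constructor <;> norm_num :
            (0:ℝ) ∈ Ico 0 1)] with s hs
        filter_upwards [ae_restrict_mem measurableSet_Ioi] with u hu
        have hu0 : (0:ℝ) < u := hu
        by_cases h1 : u ≤ 1
        · have hsu : (0:ℝ) < s * u := mul_pos hs.1 hu0
          have hx : |(-(s * u))| ≤ 1 := by
            rw [abs_neg, abs_of_nonneg hsu.le]
            nlinarith [mul_le_mul hs.2 h1 hu0.le zero_le_one]
          have := Real.abs_exp_sub_one_sub_id_le hx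
          rw [if_pos h1, mul_one]
          have heq : Real.exp (-(s * u)) - 1 + s * u
              = Real.exp (-(s * u)) - 1 - (-(s * u)) := by ring
          rw [heq]
          have hmin1 : min 1 (u ^ 2) = u ^ 2 := min_eq_right (by nlinarith)
          rw [hmin1]
          calc |Real.exp (-(s * u)) - 1 - (-(s * u))| ≤ (-(s * u)) ^ 2 := this
            _ = s ^ 2 * u ^ 2 := by ring
            _ ≤ 2 * u ^ 2 := by
                have hs2 : s ^ 2 ≤ 1 := pow_le_one₀ hs.1.le hs.2
                nlinarith [sq_nonneg u]
        · rw [if_neg h1, mul_zero, add_zero]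
          have hmin1 : min 1 (u ^ 2) = 1 := min_eq_left (by nlinarith)
          rw [hmin1, mul_one]
          have he1 : Real.exp (-(s * u)) ≤ 1 :=
            Real.exp_le_one_iff.2 (by nlinarith [hs.1])
          have he0 : 0 < Real.exp (-(s * u)) := Real.exp_pos _
          rw [Real.norm_eq_abs, abs_of_nonpos (by linarith)]
          linarith
      case bint => exact hmin.const_mul 2
      case lim =>
        refine Eventually.of_forall fun u => ?_
        have hcont : Continuous (fun s : ℝ =>
            Real.exp (-(s * u)) - 1 + s * u * (if u ≤ 1 then (1:ℝ) else 0)) := by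
          fun_prop
        have h := (hcont.tendsto 0).mono_left (nhdsWithin_le_nhds (s := Ioi (0:ℝ)))
        simpa using h
    have hbs : Tendsto (fun s : ℝ => b * s + σ ^ 2 / 2 * s ^ 2) (𝓝[>] (0:ℝ)) (𝓝 0) := by
      have hcont : Continuous (fun s : ℝ => b * s + σ ^ 2 / 2 * s ^ 2) := by fun_prop
      have h := (hcont.tendsto 0).mono_left (nhdsWithin_le_nhds (s := Ioi (0:ℝ)))
      simpa using h
    have hsum := hbs.add hI
    rw [add_zero] at hsum
    refine hsum.congr' ?_
    filter_upwards [self_mem_nhdsWithin] with s hs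
    exact (hψ s (le_of_lt hs)).symm
  have hcp : Tendsto (fun s : ℝ => c / (s - p)) (𝓝[>] (0:ℝ)) (𝓝 (c / (0 - p))) := by
    refine Tendsto.div tendsto_const_nhds ?_ (by intro h; rw [zero_sub] at h; linarith [neg_eq_zero.1 h])
    exact ((continuous_id.sub continuous_const).tendsto 0).mono_left nhdsWithin_le_nhds
  have hg : Tendsto (fun s : ℝ => -(ψ s * (c / (s - p))) + 1) (𝓝[>] (0:ℝ)) (𝓝 1) := by
    have := ((hψ0.mul hcp).neg).add (tendsto_const_nhds (x := (1:ℝ)))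
    simpa using this
  refine hg.congr' ?_
  filter_upwards [Ioo_mem_nhdsGT_of_mem (by constructor <;> [exact le_rfl; exact hp] :
      (0:ℝ) ∈ Ico 0 p)] with s hs
  rw [part1 s hs]
  have hψs : ψ s ≠ 0 := (hψ_neg s hs).ne
  have hsp : s - p ≠ 0 := sub_ne_zero.2 (ne_of_lt hs.2)
  field_simp
  ring
end

section
/- Let ψ(s) = γs + (σ²/2)s² + ∫_{(0,∞)} (e^{−sz} − 1 + sz·1_{z≤1}) ν(dz) be the Laplace exponent of a spectrally positive Lévy process and suppose p ∈ (0,∞) satisfies ψ(p) = 0. Define π(y) := ∫_{(y,∞)} e^{p(y−z)} ν(dz) for y > 0 and Π̄(z) := ∫_z^∞ π(y) dy. Then for every s > 0 with s ≠ p: ψ(s)/(s−p) = (σ²/2)s + ∫_0^∞ (1 − e^{−sy}) π(y) dy = s ( σ²/2 + ∫_0^∞ e^{−sz} Π̄(z) dz ), all integrals being finite. -/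
open MeasureTheory Filter Set Topology
open scoped ENNReal


lemma hint_exp (c : ℝ) (hc : c ≠ 0) (a b : ℝ) :
    ∫ x in a..b, Real.exp (c * x) = (Real.exp (c * b) - Real.exp (c * a)) / c := by
  rw [intervalIntegral.integral_comp_mul_left Real.exp hc, integral_exp, smul_eq_mul]
  ring

lemma exp_lb (x : ℝ) : 0 ≤ Real.exp (-x) - 1 + x := by
  nlinarith [Real.add_one_le_exp (-x)]

lemma exp_ub (x : ℝ) (hx : 0 ≤ x) : Real.exp (-x) - 1 + x ≤ x ^ 2 := by
  have h1 := Real.add_one_le_exp x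
  have h2 : Real.exp (-x) * Real.exp x = 1 := by rw [← Real.exp_add]; simp
  have h5 : 0 ≤ Real.exp (-x) := (Real.exp_pos _).le
  have h4 : Real.exp (-x) * (x + 1) ≤ 1 := by
    calc Real.exp (-x) * (x + 1) ≤ Real.exp (-x) * Real.exp x :=
          mul_le_mul_of_nonneg_left h1 h5
      _ = 1 := h2
  nlinarith [pow_nonneg hx 3, sq_nonneg x]

lemma habs (t z : ℝ) (ht : 0 ≤ t) (hz : 0 < z) :
    |Real.exp (-(t * z)) - 1 + t * z * (if z ≤ 1 then 1 else 0)| ≤ max 1 (t ^ 2) * min 1 (z ^ 2) := by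
  have htz : 0 ≤ t * z := mul_nonneg ht hz.le
  by_cases h1 : z ≤ 1
  · simp only [h1, if_pos, mul_one]
    have hlb := exp_lb (t * z)
    have hub := exp_ub (t * z) htz
    have hmin : min 1 (z ^ 2) = z ^ 2 := min_eq_right (by nlinarith)
    rw [hmin, abs_of_nonneg hlb]
    calc Real.exp (-(t * z)) - 1 + t * z ≤ (t * z) ^ 2 := hub
      _ = t ^ 2 * z ^ 2 := by ring
      _ ≤ max 1 (t ^ 2) * z ^ 2 := by nlinarith [le_max_right 1 (t ^ 2), sq_nonneg z]
  · simp only [h1, if_neg, not_false_iff, mul_zero, add_zero]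
    have hmin : min 1 (z ^ 2) = 1 := min_eq_left (by nlinarith)
    rw [hmin, mul_one]
    have h2 : Real.exp (-(t * z)) ≤ 1 := Real.exp_le_one_iff.2 (by linarith)
    have h3 : 0 < Real.exp (-(t * z)) := Real.exp_pos _
    rw [abs_le]
    constructor
    · have := le_max_left 1 (t ^ 2); linarith
    · have := le_max_left 1 (t ^ 2); linarith

lemma min_meas : Measurable fun z : ℝ => min 1 (z ^ 2) :=
  (measurable_const.min (measurable_id.pow_const 2))

lemma integrable_min_sq (ν : Measure ℝ)
    (hν_int : ∫⁻ z in Ioi 0, ENNReal.ofReal (min 1 (z ^ 2)) ∂ν < ⊤) (c : ℝ) :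
    Integrable (fun z => c * min 1 (z ^ 2)) (ν.restrict (Ioi 0)) := by
  refine ⟨((measurable_const.mul min_meas)).aestronglyMeasurable, ?_⟩
  rw [hasFiniteIntegral_iff_norm]
  calc ∫⁻ z, ENNReal.ofReal ‖c * min 1 (z ^ 2)‖ ∂(ν.restrict (Ioi 0))
      = ∫⁻ z, ENNReal.ofReal |c| * ENNReal.ofReal (min 1 (z ^ 2)) ∂(ν.restrict (Ioi 0)) := by
        refine lintegral_congr fun z => ?_
        rw [← ENNReal.ofReal_mul (abs_nonneg c), Real.norm_eq_abs, abs_mul]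
        congr 1
        rw [abs_of_nonneg (le_min zero_le_one (sq_nonneg z))]
    _ = ENNReal.ofReal |c| * ∫⁻ z, ENNReal.ofReal (min 1 (z ^ 2)) ∂(ν.restrict (Ioi 0)) :=
        lintegral_const_mul' _ _ ENNReal.ofReal_ne_top
    _ < ⊤ := ENNReal.mul_lt_top ENNReal.ofReal_lt_top hν_int

lemma integrable_E (ν : Measure ℝ)
    (hν_int : ∫⁻ z in Ioi 0, ENNReal.ofReal (min 1 (z ^ 2)) ∂ν < ⊤) (t : ℝ) (ht : 0 ≤ t) :
    Integrable (fun z => Real.exp (-(t * z)) - 1 + t * z * (if z ≤ 1 then 1 else 0))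
      (ν.restrict (Ioi 0)) := by
  refine Integrable.mono' (integrable_min_sq ν hν_int (max 1 (t ^ 2))) ?_ ?_
  · refine Measurable.aestronglyMeasurable ?_
    refine (((Real.measurable_exp.comp (measurable_const.mul measurable_id).neg).sub
      measurable_const).add ?_)
    exact (measurable_const.mul measurable_id).mul
      (Measurable.ite (measurableSet_Iic) measurable_const measurable_const)
  · filter_upwards [ae_restrict_mem measurableSet_Ioi] with z hz
    rw [Real.norm_eq_abs]
    exact habs t z ht hz

lemma nu_fin (ν : Measure ℝ)
    (hν_int : ∫⁻ z in Ioi 0, ENNReal.ofReal (min 1 (z ^ 2)) ∂ν < ⊤)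
    (a : ℝ) (ha : 0 < a) : ν (Ioi a) < ⊤ := by
  have hca : (0:ℝ) < min 1 (a ^ 2) := lt_min one_pos (by positivity)
  have h1 : ENNReal.ofReal (min 1 (a ^ 2)) * ν (Ioi a)
      ≤ ∫⁻ z in Ioi 0, ENNReal.ofReal (min 1 (z ^ 2)) ∂ν := by
    calc ENNReal.ofReal (min 1 (a ^ 2)) * ν (Ioi a)
        = ∫⁻ _ in Ioi a, ENNReal.ofReal (min 1 (a ^ 2)) ∂ν := by
          rw [setLIntegral_const, mul_comm]
      _ ≤ ∫⁻ z in Ioi a, ENNReal.ofReal (min 1 (z ^ 2)) ∂ν := by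
          refine lintegral_mono_ae ?_
          filter_upwards [ae_restrict_mem measurableSet_Ioi] with z hz
          refine ENNReal.ofReal_le_ofReal (min_le_min le_rfl ?_)
          have : a ≤ z := le_of_lt hz
          nlinarith
      _ ≤ ∫⁻ z in Ioi 0, ENNReal.ofReal (min 1 (z ^ 2)) ∂ν :=
          lintegral_mono_set (fun x hx => lt_trans ha hx)
  by_contra h
  rw [not_lt, top_le_iff] at h
  have hne : ENNReal.ofReal (min 1 (a ^ 2)) ≠ 0 := by
    simp only [ne_eq, ENNReal.ofReal_eq_zero, not_le]
    exact hca
  rw [h, ENNReal.mul_top hne] at h1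
  exact absurd (top_le_iff.mp h1) hν_int.ne

lemma sigfin (ν : Measure ℝ)
    (hν_int : ∫⁻ z in Ioi 0, ENNReal.ofReal (min 1 (z ^ 2)) ∂ν < ⊤) :
    SigmaFinite (ν.restrict (Ioi 0)) := by
  refine ⟨⟨⟨fun n => Iic 0 ∪ Ioi (1 / (n + 1)), fun _ => trivial, fun n => ?_, ?_⟩⟩⟩
  · rw [Measure.restrict_apply' measurableSet_Ioi]
    refine lt_of_le_of_lt (measure_mono ?_) (nu_fin ν hν_int (1 / (n + 1)) (by positivity))
    rintro x ⟨hx1 | hx1, hx2⟩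
    · exact absurd (mem_Ioi.mp hx2) (not_lt.2 hx1)
    · exact hx1
  · rw [eq_univ_iff_forall]
    intro x
    by_cases hx : x ≤ 0
    · exact mem_iUnion.2 ⟨0, Or.inl hx⟩
    · obtain ⟨n, hn⟩ := exists_nat_one_div_lt (lt_of_not_ge hx)
      exact mem_iUnion.2 ⟨n, Or.inr hn⟩

lemma inner_int (p s z : ℝ) (hp : 0 < p) (hs : 0 < s) (hz : 0 < z) (hsp : s ≠ p) :
    ∫ y in Ioo 0 z, (1 - Real.exp (-(s * y))) * Real.exp (p * (y - z)) =
      (1 - Real.exp (-(p * z))) / p + (Real.exp (-(s * z)) - Real.exp (-(p * z))) / (s - p) := by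
  have hps : p - s ≠ 0 := sub_ne_zero.2 (Ne.symm hsp)
  have hsp' : s - p ≠ 0 := sub_ne_zero.2 hsp
  have h1 : ∀ y, (1 - Real.exp (-(s * y))) * Real.exp (p * (y - z)) =
      Real.exp (-(p * z)) * (Real.exp (p * y) - Real.exp ((p - s) * y)) := by
    intro y
    have e1 : Real.exp (p * (y - z)) = Real.exp (p * y) * Real.exp (-(p * z)) := by
      rw [← Real.exp_add]; ring_nf
    have e2 : Real.exp (-(s * y)) * Real.exp (p * (y - z)) =
        Real.exp ((p - s) * y) * Real.exp (-(p * z)) := by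
      rw [← Real.exp_add, ← Real.exp_add]; ring_nf
    calc (1 - Real.exp (-(s * y))) * Real.exp (p * (y - z))
        = Real.exp (p * (y - z)) - Real.exp (-(s * y)) * Real.exp (p * (y - z)) := by ring
      _ = _ := by rw [e2, e1]; ring
  simp_rw [h1]
  rw [← integral_Ioc_eq_integral_Ioo, ← intervalIntegral.integral_of_le hz.le,
    intervalIntegral.integral_const_mul,
    intervalIntegral.integral_sub
      ((Continuous.intervalIntegrable (by fun_prop) 0 z :
        IntervalIntegrable (fun x => Real.exp (p * x)) volume 0 z))
      ((Continuous.intervalIntegrable (by fun_prop) 0 z :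
        IntervalIntegrable (fun x => Real.exp ((p - s) * x)) volume 0 z)),
    hint_exp p hp.ne' 0 z, hint_exp (p - s) hps 0 z]
  have hx : Real.exp (-(p * z)) = (Real.exp (p * z))⁻¹ := by rw [Real.exp_neg]
  have hy : Real.exp ((p - s) * z) = Real.exp (p * z) * Real.exp (-(s * z)) := by
    rw [← Real.exp_add]; ring_nf
  rw [mul_zero, Real.exp_zero, hy, hx]
  have h0 : Real.exp (p * z) ≠ 0 := Real.exp_ne_zero _
  field_simp
  ring_nf
  simp only [Real.exp_zero]
  ring

lemma inner_int2 (s y : ℝ) (hs : 0 < s) (hy : 0 < y) :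
    ∫ z in Ioo 0 y, Real.exp (-(s * z)) = (1 - Real.exp (-(s * y))) / s := by
  have h1 : ∀ z : ℝ, -(s * z) = (-s) * z := fun z => by ring
  simp_rw [h1]
  rw [← integral_Ioc_eq_integral_Ioo, ← intervalIntegral.integral_of_le hy.le,
    hint_exp (-s) (neg_ne_zero.2 hs.ne') 0 y]
  rw [mul_zero, Real.exp_zero, div_eq_div_iff (neg_ne_zero.2 hs.ne') hs.ne']
  ring

set_option maxHeartbeats 1000000 in
/-- With `ψ` the Laplace exponent of a spectrally positive Lévy process,
`p ∈ (0,∞)` a root of `ψ`, `π(y) := ∫_{(y,∞)} e^{p(y-z)} ν(dz)` and `Π̄(z) := ∫_z^∞ π(y)dy`,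
for every `s > 0` with `s ≠ p` all the integrals below are finite and
`ψ(s)/(s-p) = (σ²/2)s + ∫_0^∞ (1-e^{-sy}) π(y) dy = s(σ²/2 + ∫_0^∞ e^{-sz} Π̄(z) dz)`. -/
theorem stmt_4 (b σ : ℝ) (hσ : 0 ≤ σ) (ν : Measure ℝ)
    (hν_supp : ν (Iic 0) = 0)
    (hν_int : ∫⁻ z in Ioi 0, ENNReal.ofReal (min 1 (z ^ 2)) ∂ν < ⊤)
    (ψ : ℝ → ℝ)
    (hψ : ∀ s, 0 ≤ s → ψ s = b * s + σ ^ 2 / 2 * s ^ 2 +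
      ∫ z in Ioi 0, (Real.exp (-(s * z)) - 1 + s * z * (if z ≤ 1 then 1 else 0)) ∂ν)
    (p : ℝ) (hp : 0 < p) (hψp : ψ p = 0)
    (pr : ℝ → ℝ)
    (hpr : ∀ y, 0 < y → pr y = ∫ z in Ioi y, Real.exp (p * (y - z)) ∂ν)
    (Pib : ℝ → ℝ)
    (hPib : ∀ z, 0 < z → Pib z = ∫ y in Ioi z, pr y) :
    ∀ s, 0 < s → s ≠ p →
      (∀ y, 0 < y → IntegrableOn (fun z => Real.exp (p * (y - z))) (Ioi y) ν) ∧
      (∀ z, 0 < z → IntegrableOn pr (Ioi z)) ∧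
      IntegrableOn (fun y => (1 - Real.exp (-(s * y))) * pr y) (Ioi 0) ∧
      IntegrableOn (fun z => Real.exp (-(s * z)) * Pib z) (Ioi 0) ∧
      ψ s / (s - p) = σ ^ 2 / 2 * s + ∫ y in Ioi 0, (1 - Real.exp (-(s * y))) * pr y ∧
      ψ s / (s - p) = s * (σ ^ 2 / 2 + ∫ z in Ioi 0, Real.exp (-(s * z)) * Pib z) := by
  haveI hsfin : SigmaFinite (ν.restrict (Ioi 0)) := sigfin ν hν_int
  -- the kernel L y = ∫⁻_{(y,∞)} e^{p(y-z)} dν(z)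
  set L : ℝ → ℝ≥0∞ := fun y =>
    ∫⁻ z, (if y < z then ENNReal.ofReal (Real.exp (p * (y - z))) else 0)
      ∂(ν.restrict (Ioi 0)) with hL
  have hFm : Measurable (fun q : ℝ × ℝ => if q.1 < q.2
      then ENNReal.ofReal (Real.exp (p * (q.1 - q.2))) else 0) := by
    refine Measurable.ite (measurableSet_lt measurable_fst measurable_snd) ?_ measurable_const
    exact ENNReal.measurable_ofReal.comp (by fun_prop)
  have hLm : Measurable L := by
    exact Measurable.lintegral_prod_right
      (f := fun y z => if y < z then ENNReal.ofReal (Real.exp (p * (y - z))) else 0) hFm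
  have hrr : ∀ y : ℝ, 0 < y → (ν.restrict (Ioi 0)).restrict (Ioi y) = ν.restrict (Ioi y) := by
    intro y hy
    rw [Measure.restrict_restrict measurableSet_Ioi]
    congr 1
    exact inter_eq_self_of_subset_left (fun x hx => lt_trans hy hx)
  have hLy : ∀ y : ℝ, 0 < y →
      L y = ∫⁻ z in Ioi y, ENNReal.ofReal (Real.exp (p * (y - z))) ∂ν := by
    intro y hy
    rw [hL]
    beta_reduce
    have : ∀ z : ℝ, (if y < z then ENNReal.ofReal (Real.exp (p * (y - z))) else 0) =
        (Ioi y).indicator (fun z => ENNReal.ofReal (Real.exp (p * (y - z)))) z := by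
      intro z; rw [indicator_apply]; rfl
    rw [lintegral_congr this, lintegral_indicator measurableSet_Ioi, hrr y hy]
  have hLle : ∀ y : ℝ, 0 < y → L y ≤ ν (Ioi y) := by
    intro y hy
    rw [hLy y hy]
    calc ∫⁻ z in Ioi y, ENNReal.ofReal (Real.exp (p * (y - z))) ∂ν
        ≤ ∫⁻ _ in Ioi y, 1 ∂ν := by
          refine lintegral_mono_ae ?_
          filter_upwards [ae_restrict_mem measurableSet_Ioi] with z hz
          refine ENNReal.ofReal_le_one.2 (Real.exp_le_one_iff.2 ?_)
          exact mul_nonpos_of_nonneg_of_nonpos hp.le (by linarith [mem_Ioi.mp hz])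
      _ = ν (Ioi y) := setLIntegral_one _
  have hLlt : ∀ y : ℝ, 0 < y → L y < ⊤ :=
    fun y hy => lt_of_le_of_lt (hLle y hy) (nu_fin ν hν_int y hy)
  have comp1 : ∀ y, 0 < y → IntegrableOn (fun z => Real.exp (p * (y - z))) (Ioi y) ν := by
    intro y hy
    refine Integrable.mono' (g := fun _ => (1 : ℝ))
      (integrableOn_const (nu_fin ν hν_int y hy).ne) ?_ ?_
    · exact Continuous.aestronglyMeasurable (by fun_prop)
    · filter_upwards [ae_restrict_mem measurableSet_Ioi] with z hz
      rw [Real.norm_eq_abs, abs_of_nonneg (Real.exp_nonneg _)]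
      exact Real.exp_le_one_iff.2
        (mul_nonpos_of_nonneg_of_nonpos hp.le (by linarith [mem_Ioi.mp hz]))
  have hprL : ∀ y : ℝ, 0 < y → pr y = (L y).toReal := by
    intro y hy
    rw [hpr y hy, integral_eq_lintegral_of_nonneg_ae
      (Eventually.of_forall fun z => Real.exp_nonneg _)
      (Continuous.aestronglyMeasurable (by fun_prop : Continuous fun z : ℝ => Real.exp (p * (y - z)))),
      ← hLy y hy]
  -- W and M
  set W : ℝ → ℝ≥0∞ := fun y => if 0 < y then L y else 0 with hWdef
  have hWm : Measurable W := Measurable.ite measurableSet_Ioi hLm measurable_const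
  set M : ℝ → ℝ≥0∞ := fun z => ∫⁻ y in Ioi z, W y ∂volume with hMdef
  have hManti : Antitone M := by
    intro z1 z2 h
    exact lintegral_mono' (Measure.restrict_mono (fun x hx => lt_of_le_of_lt h hx) le_rfl)
      (le_refl W)
  have hMm : Measurable M := hManti.measurable
  intro s hs hsps
  have hsp' : s - p ≠ 0 := sub_ne_zero.2 hsps
  have hIs := integrable_E ν hν_int s hs.le
  have hIp := integrable_E ν hν_int p hp.le
  set Is := ∫ z in Ioi 0, (Real.exp (-(s * z)) - 1 + s * z * (if z ≤ 1 then 1 else 0)) ∂ν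
    with hIsdef
  set Ip := ∫ z in Ioi 0, (Real.exp (-(p * z)) - 1 + p * z * (if z ≤ 1 then 1 else 0)) ∂ν
    with hIpdef
  have hψs : ψ s = b * s + σ ^ 2 / 2 * s ^ 2 + Is := hψ s hs.le
  have hψpv : b * p + σ ^ 2 / 2 * p ^ 2 + Ip = 0 := by rw [← hψ p hp.le]; exact hψp
  -- the function g
  set g : ℝ → ℝ := fun z => ((Real.exp (-(s * z)) - 1 + s * z * (if z ≤ 1 then 1 else 0)) -
    (s / p) * (Real.exp (-(p * z)) - 1 + p * z * (if z ≤ 1 then 1 else 0))) / (s - p) with hgdef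
  have hgInt : Integrable g (ν.restrict (Ioi 0)) := (hIs.sub (hIp.const_mul (s / p))).div_const _
  have hgval : ∫ z in Ioi 0, g z ∂ν = (Is - (s / p) * Ip) / (s - p) := by
    rw [hgdef, hIsdef, hIpdef]
    rw [integral_div, integral_sub hIs (hIp.const_mul _), integral_const_mul]
  have hgeq : ∀ z : ℝ, 0 < z → g z = (1 - Real.exp (-(p * z))) / p +
      (Real.exp (-(s * z)) - Real.exp (-(p * z))) / (s - p) := by
    intro z hz
    rw [hgdef]
    field_simp
    split_ifs <;> ring
  have hinner' : ∀ z : ℝ, 0 < z →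
      ∫ y in Ioo 0 z, (1 - Real.exp (-(s * y))) * Real.exp (p * (y - z)) = g z := by
    intro z hz
    rw [inner_int p s z hp hs hz hsps, hgeq z hz]
  have hgnn : ∀ z : ℝ, 0 < z → 0 ≤ g z := by
    intro z hz
    rw [← hinner' z hz]
    refine setIntegral_nonneg measurableSet_Ioo fun y hy => mul_nonneg ?_ (Real.exp_nonneg _)
    have h1 : 0 ≤ s * y := mul_nonneg hs.le (le_of_lt hy.1)
    have h2 : Real.exp (-(s * y)) ≤ 1 := Real.exp_le_one_iff.2 (neg_nonpos.2 h1)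
    linarith
  set C : ℝ := (max 1 (s ^ 2) + (s / p) * max 1 (p ^ 2)) / |s - p| with hCdef
  have hC : 0 ≤ C := by positivity
  have hgbd : ∀ z : ℝ, 0 < z → g z ≤ C * min 1 (z ^ 2) := by
    intro z hz
    have h1 := habs s z hs.le hz
    have h2 := habs p z hp.le hz
    have hq : 0 ≤ s / p := div_nonneg hs.le hp.le
    have tri : ∀ a c : ℝ, |a - c| ≤ |a| + |c| := fun a c => by
      rw [sub_eq_add_neg]
      exact (abs_add_le _ _).trans (by rw [abs_neg])
    calc g z ≤ |g z| := le_abs_self _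
      _ = |(Real.exp (-(s * z)) - 1 + s * z * (if z ≤ 1 then 1 else 0)) -
            (s / p) * (Real.exp (-(p * z)) - 1 + p * z * (if z ≤ 1 then 1 else 0))| / |s - p| := by
          rw [hgdef, abs_div]
      _ ≤ (|Real.exp (-(s * z)) - 1 + s * z * (if z ≤ 1 then 1 else 0)| +
            (s / p) * |Real.exp (-(p * z)) - 1 + p * z * (if z ≤ 1 then 1 else 0)|) / |s - p| := by
          gcongr
          refine (tri _ _).trans ?_
          rw [abs_mul, abs_of_nonneg hq]
      _ ≤ (max 1 (s ^ 2) * min 1 (z ^ 2) + (s / p) * (max 1 (p ^ 2) * min 1 (z ^ 2))) / |s - p| := by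
          gcongr
      _ = C * min 1 (z ^ 2) := by rw [hCdef]; ring
  -- Tonelli 1
  set Φ : ℝ × ℝ → ℝ≥0∞ := fun q => if 0 < q.2 ∧ q.2 < q.1 then
    ENNReal.ofReal ((1 - Real.exp (-(s * q.2))) * Real.exp (p * (q.2 - q.1))) else 0 with hΦ
  have hΦm : Measurable Φ := by
    refine Measurable.ite ?_ (ENNReal.measurable_ofReal.comp (by fun_prop)) measurable_const
    exact (measurableSet_lt measurable_const measurable_snd).inter
      (measurableSet_lt measurable_snd measurable_fst)
  have swap1 : ∫⁻ z, ∫⁻ y, Φ (z, y) ∂volume ∂(ν.restrict (Ioi 0)) =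
      ∫⁻ y, ∫⁻ z, Φ (z, y) ∂(ν.restrict (Ioi 0)) ∂volume :=
    lintegral_lintegral_swap (f := fun z y => Φ (z, y)) hΦm.aemeasurable
  have lhs1 : (∫⁻ z, ∫⁻ y, Φ (z, y) ∂volume ∂(ν.restrict (Ioi 0))) =
      ∫⁻ z, ENNReal.ofReal (g z) ∂(ν.restrict (Ioi 0)) := by
    refine lintegral_congr_ae ?_
    filter_upwards [ae_restrict_mem measurableSet_Ioi] with z hz
    have hzpos : (0 : ℝ) < z := hz
    have step1 : ∀ y : ℝ, Φ (z, y) = (Ioo 0 z).indicator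
        (fun y => ENNReal.ofReal ((1 - Real.exp (-(s * y))) * Real.exp (p * (y - z)))) y := by
      intro y
      simp only [hΦ, indicator_apply, mem_Ioo]
    have hcont : Continuous fun y : ℝ => (1 - Real.exp (-(s * y))) * Real.exp (p * (y - z)) := by
      fun_prop
    have hint : IntegrableOn (fun y => (1 - Real.exp (-(s * y))) * Real.exp (p * (y - z)))
        (Ioo 0 z) volume :=
      ((hcont.continuousOn).integrableOn_compact isCompact_Icc).mono_set Ioo_subset_Icc_self
    have hnn : 0 ≤ᵐ[volume.restrict (Ioo 0 z)]
        fun y => (1 - Real.exp (-(s * y))) * Real.exp (p * (y - z)) := by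
      filter_upwards [ae_restrict_mem measurableSet_Ioo] with y hy
      refine mul_nonneg ?_ (Real.exp_nonneg _)
      have h1 : 0 ≤ s * y := mul_nonneg hs.le (le_of_lt hy.1)
      have h2 : Real.exp (-(s * y)) ≤ 1 := Real.exp_le_one_iff.2 (neg_nonpos.2 h1)
      linarith
    rw [lintegral_congr step1, lintegral_indicator measurableSet_Ioo,
      ← ofReal_integral_eq_lintegral_ofReal hint hnn, hinner' z hzpos]
  have rhs1 : (∫⁻ y, ∫⁻ z, Φ (z, y) ∂(ν.restrict (Ioi 0)) ∂volume) =
      ∫⁻ y in Ioi 0, ENNReal.ofReal (1 - Real.exp (-(s * y))) * L y ∂volume := by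
    rw [← lintegral_indicator measurableSet_Ioi]
    refine lintegral_congr fun y => ?_
    by_cases hy : 0 < y
    · rw [indicator_of_mem (mem_Ioi.2 hy)]
      have hstep : ∀ z : ℝ, Φ (z, y) = ENNReal.ofReal (1 - Real.exp (-(s * y))) *
          (if y < z then ENNReal.ofReal (Real.exp (p * (y - z))) else 0) := by
        intro z
        simp only [hΦ]
        by_cases h : y < z
        · rw [if_pos ⟨hy, h⟩, if_pos h, ENNReal.ofReal_mul]
          have h1 : 0 ≤ s * y := mul_nonneg hs.le hy.le
          have h2 : Real.exp (-(s * y)) ≤ 1 := Real.exp_le_one_iff.2 (neg_nonpos.2 h1)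
          linarith
        · rw [if_neg (fun hc => h hc.2), if_neg h, mul_zero]
      have hmF : Measurable fun z : ℝ =>
          if y < z then ENNReal.ofReal (Real.exp (p * (y - z))) else 0 := by
        refine Measurable.ite ?_
          ((by fun_prop : Measurable fun z : ℝ => Real.exp (p * (y - z))).ennreal_ofReal)
          measurable_const
        exact measurableSet_Ioi
      rw [lintegral_congr hstep, lintegral_const_mul _ hmF]
    · rw [indicator_of_notMem (by simpa using hy)]
      have hstep : ∀ z : ℝ, Φ (z, y) = 0 := by
        intro z
        simp only [hΦ]
        exact if_neg (fun hc => hy hc.1)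
      rw [lintegral_congr hstep, lintegral_zero]
  set A := ∫⁻ y in Ioi 0, ENNReal.ofReal (1 - Real.exp (-(s * y))) * L y ∂volume with hAdef
  have hA : A = ∫⁻ z, ENNReal.ofReal (g z) ∂(ν.restrict (Ioi 0)) := by
    rw [← rhs1, ← swap1, lhs1]
  have hAlt : A < ⊤ := by
    rw [hA]
    calc ∫⁻ z, ENNReal.ofReal (g z) ∂(ν.restrict (Ioi 0))
        ≤ ∫⁻ z, ENNReal.ofReal C * ENNReal.ofReal (min 1 (z ^ 2)) ∂(ν.restrict (Ioi 0)) := by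
          refine lintegral_mono_ae ?_
          filter_upwards [ae_restrict_mem measurableSet_Ioi] with z hz
          rw [← ENNReal.ofReal_mul hC]
          exact ENNReal.ofReal_le_ofReal (hgbd z hz)
      _ = ENNReal.ofReal C * ∫⁻ z in Ioi 0, ENNReal.ofReal (min 1 (z ^ 2)) ∂ν :=
          lintegral_const_mul' _ _ ENNReal.ofReal_ne_top
      _ < ⊤ := ENNReal.mul_lt_top ENNReal.ofReal_lt_top hν_int
  -- component 3 and J
  have hmeasJ : Measurable fun y => (ENNReal.ofReal (1 - Real.exp (-(s * y))) * L y) := by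
    exact (ENNReal.measurable_ofReal.comp (by fun_prop)).mul hLm
  have haeJ : (fun y => (ENNReal.ofReal (1 - Real.exp (-(s * y))) * L y).toReal)
      =ᵐ[volume.restrict (Ioi 0)] fun y => (1 - Real.exp (-(s * y))) * pr y := by
    filter_upwards [ae_restrict_mem measurableSet_Ioi] with y hy
    have h1 : 0 ≤ s * y := mul_nonneg hs.le (le_of_lt hy)
    have h2 : Real.exp (-(s * y)) ≤ 1 := Real.exp_le_one_iff.2 (neg_nonpos.2 h1)
    rw [ENNReal.toReal_mul, ENNReal.toReal_ofReal (by linarith), hprL y hy]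
  have comp3 : IntegrableOn (fun y => (1 - Real.exp (-(s * y))) * pr y) (Ioi 0) volume :=
    (integrable_toReal_of_lintegral_ne_top hmeasJ.aemeasurable hAlt.ne).congr haeJ
  have hJ : ∫ y in Ioi 0, (1 - Real.exp (-(s * y))) * pr y = A.toReal := by
    rw [← integral_congr_ae haeJ, integral_toReal hmeasJ.aemeasurable
      (ae_lt_top hmeasJ hAlt.ne), ← hAdef]
  have hJg : ∫ y in Ioi 0, (1 - Real.exp (-(s * y))) * pr y = ∫ z in Ioi 0, g z ∂ν := by
    rw [hJ, hA, ← integral_eq_lintegral_of_nonneg_ae ?_ hgInt.aestronglyMeasurable]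
    · filter_upwards [ae_restrict_mem measurableSet_Ioi] with z hz
      exact hgnn z hz
  -- goal 5
  have goal5 : ψ s / (s - p) = σ ^ 2 / 2 * s +
      ∫ y in Ioi 0, (1 - Real.exp (-(s * y))) * pr y := by
    rw [hJg, hgval, hψs]
    have hIpval : Ip = -(b * p + σ ^ 2 / 2 * p ^ 2) := by linarith
    rw [hIpval]
    field_simp
    ring
  -- Tonelli 2
  set Ψ : ℝ × ℝ → ℝ≥0∞ := fun q => if 0 < q.1 ∧ q.1 < q.2 then
    ENNReal.ofReal (Real.exp (-(s * q.1))) * W q.2 else 0 with hΨ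
  have hΨm : Measurable Ψ := by
    refine Measurable.ite ?_ ?_ measurable_const
    · exact (measurableSet_lt measurable_const measurable_fst).inter
        (measurableSet_lt measurable_fst measurable_snd)
    · exact (ENNReal.measurable_ofReal.comp (by fun_prop)).mul (hWm.comp measurable_snd)
  have swap2 : ∫⁻ z, ∫⁻ y, Ψ (z, y) ∂volume ∂volume =
      ∫⁻ y, ∫⁻ z, Ψ (z, y) ∂volume ∂volume :=
    lintegral_lintegral_swap (f := fun z y => Ψ (z, y)) hΨm.aemeasurable
  have lhs2 : (∫⁻ z, ∫⁻ y, Ψ (z, y) ∂volume ∂volume) =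
      ∫⁻ z in Ioi 0, ENNReal.ofReal (Real.exp (-(s * z))) * M z ∂volume := by
    rw [← lintegral_indicator measurableSet_Ioi]
    refine lintegral_congr fun z => ?_
    by_cases hz : 0 < z
    · rw [indicator_of_mem (mem_Ioi.2 hz)]
      have hstep : ∀ y : ℝ, Ψ (z, y) = ENNReal.ofReal (Real.exp (-(s * z))) *
          (Ioi z).indicator W y := by
        intro y
        simp only [hΨ, indicator_apply, mem_Ioi]
        by_cases h : z < y
        · rw [if_pos ⟨hz, h⟩, if_pos h]
        · rw [if_neg (fun hc => h hc.2), if_neg h, mul_zero]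
      rw [lintegral_congr hstep, lintegral_const_mul _ (hWm.indicator measurableSet_Ioi),
        lintegral_indicator measurableSet_Ioi]
    · rw [indicator_of_notMem (by simpa using hz)]
      have hstep : ∀ y : ℝ, Ψ (z, y) = 0 := by
        intro y
        simp only [hΨ]
        exact if_neg (fun hc => hz hc.1)
      rw [lintegral_congr hstep, lintegral_zero]
  have rhs2 : (∫⁻ y, ∫⁻ z, Ψ (z, y) ∂volume ∂volume) =
      ∫⁻ y in Ioi 0, ENNReal.ofReal ((1 - Real.exp (-(s * y))) / s) * L y ∂volume := by
    rw [← lintegral_indicator measurableSet_Ioi]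
    refine lintegral_congr fun y => ?_
    by_cases hy : 0 < y
    · rw [indicator_of_mem (mem_Ioi.2 hy)]
      have hstep : ∀ z : ℝ, Ψ (z, y) = (Ioo 0 y).indicator
          (fun z => ENNReal.ofReal (Real.exp (-(s * z)))) z * W y := by
        intro z
        simp only [hΨ, indicator_apply, mem_Ioo]
        by_cases h : 0 < z ∧ z < y
        · rw [if_pos h, if_pos h]
        · rw [if_neg h, if_neg h, zero_mul]
      rw [lintegral_congr hstep, lintegral_mul_const _
        (((by fun_prop : Measurable fun z : ℝ => Real.exp (-(s * z))).ennreal_ofReal).indicator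
          measurableSet_Ioo),
        lintegral_indicator measurableSet_Ioo]
      have hcont : Continuous fun z : ℝ => Real.exp (-(s * z)) := by fun_prop
      have hint : IntegrableOn (fun z => Real.exp (-(s * z))) (Ioo 0 y) volume :=
        ((hcont.continuousOn).integrableOn_compact isCompact_Icc).mono_set Ioo_subset_Icc_self
      rw [← ofReal_integral_eq_lintegral_ofReal hint
        (Eventually.of_forall fun z => Real.exp_nonneg _), inner_int2 s y hs hy]
      have hWy : W y = L y := if_pos hy
      rw [hWy, mul_comm]
    · rw [indicator_of_notMem (by simpa using hy)]
      have hstep : ∀ z : ℝ, Ψ (z, y) = 0 := by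
        intro z
        simp only [hΨ]
        by_cases h : 0 < z ∧ z < y
        · have hWy : W y = 0 := if_neg hy
          rw [if_pos h, hWy, mul_zero]
        · rw [if_neg h]
      rw [lintegral_congr hstep, lintegral_zero]
  set B := ∫⁻ z in Ioi 0, ENNReal.ofReal (Real.exp (-(s * z))) * M z ∂volume with hBdef
  have hB : B = ∫⁻ y in Ioi 0, ENNReal.ofReal ((1 - Real.exp (-(s * y))) / s) * L y ∂volume := by
    rw [← lhs2, swap2, rhs2]
  have hsB : ENNReal.ofReal s * B = A := by
    rw [hB, hAdef, ← lintegral_const_mul' _ _ ENNReal.ofReal_ne_top]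

    refine setLIntegral_congr_fun measurableSet_Ioi (fun y hy => ?_)
    rw [← mul_assoc, ← ENNReal.ofReal_mul hs.le]
    congr 2
    field_simp
  have hBlt : B < ⊤ := by
    by_contra h
    rw [not_lt, top_le_iff] at h
    rw [h, ENNReal.mul_top (by simp [hs.ne', hs.le]; exact hs)] at hsB
    exact absurd hsB.symm hAlt.ne
  have hMlt : ∀ z : ℝ, 0 < z → M z < ⊤ := by
    intro z0 hz0
    by_contra h
    rw [not_lt, top_le_iff] at h
    have hge : ENNReal.ofReal (Real.exp (-(s * z0))) * M z0 * ENNReal.ofReal z0 ≤ B := by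
      calc ENNReal.ofReal (Real.exp (-(s * z0))) * M z0 * ENNReal.ofReal z0
          = ∫⁻ _ in Ioo 0 z0, ENNReal.ofReal (Real.exp (-(s * z0))) * M z0 ∂volume := by
            rw [setLIntegral_const, Real.volume_Ioo, sub_zero]
        _ ≤ ∫⁻ z in Ioo 0 z0, ENNReal.ofReal (Real.exp (-(s * z))) * M z ∂volume := by
            refine lintegral_mono_ae ?_
            filter_upwards [ae_restrict_mem measurableSet_Ioo] with z hz
            refine mul_le_mul' (ENNReal.ofReal_le_ofReal (Real.exp_le_exp.2 ?_))
              (hManti hz.2.le)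
            nlinarith [hz.1, hz.2, hs]
        _ ≤ B := by
            rw [hBdef]
            exact lintegral_mono_set (fun x hx => hx.1)
    rw [h, ENNReal.mul_top (ENNReal.ofReal_pos.2 (Real.exp_pos _)).ne',
      ENNReal.top_mul (ENNReal.ofReal_pos.2 hz0).ne'] at hge
    exact absurd (top_le_iff.1 hge) hBlt.ne
  have comp2 : ∀ z, 0 < z → IntegrableOn pr (Ioi z) volume := by
    intro z hz
    have h1 : Integrable (fun y => (W y).toReal) (volume.restrict (Ioi z)) :=
      integrable_toReal_of_lintegral_ne_top hWm.aemeasurable (hMlt z hz).ne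
    refine h1.congr ?_
    filter_upwards [ae_restrict_mem measurableSet_Ioi] with y hy
    have hy0 : 0 < y := lt_trans hz hy
    rw [hWdef]
    simp only [hy0, if_pos]
    exact (hprL y hy0).symm
  have hPibM : ∀ z : ℝ, 0 < z → Pib z = (M z).toReal := by
    intro z hz
    rw [hPib z hz]
    have he : pr =ᵐ[volume.restrict (Ioi z)] fun y => (W y).toReal := by
      filter_upwards [ae_restrict_mem measurableSet_Ioi] with y hy
      have hy0 : 0 < y := lt_trans hz hy
      rw [hWdef]
      simp only [hy0, if_pos]
      exact hprL y hy0
    rw [integral_congr_ae he, integral_toReal hWm.aemeasurable ?_, hMdef]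
    filter_upwards [ae_restrict_mem measurableSet_Ioi] with y hy
    have hy0 : 0 < y := lt_trans hz hy
    rw [hWdef]
    simp only [hy0, if_pos]
    exact hLlt y hy0
  have hmeasK : Measurable fun z => ENNReal.ofReal (Real.exp (-(s * z))) * M z :=
    (ENNReal.measurable_ofReal.comp (by fun_prop)).mul hMm
  have haeK : (fun z => (ENNReal.ofReal (Real.exp (-(s * z))) * M z).toReal)
      =ᵐ[volume.restrict (Ioi 0)] fun z => Real.exp (-(s * z)) * Pib z := by
    filter_upwards [ae_restrict_mem measurableSet_Ioi] with z hz
    rw [ENNReal.toReal_mul, ENNReal.toReal_ofReal (Real.exp_nonneg _), hPibM z hz]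
  have comp4 : IntegrableOn (fun z => Real.exp (-(s * z)) * Pib z) (Ioi 0) volume :=
    (integrable_toReal_of_lintegral_ne_top hmeasK.aemeasurable hBlt.ne).congr haeK
  have hK : ∫ z in Ioi 0, Real.exp (-(s * z)) * Pib z = B.toReal := by
    rw [← integral_congr_ae haeK, integral_toReal hmeasK.aemeasurable
      (ae_lt_top hmeasK hBlt.ne), ← hBdef]
  have hJK : ∫ y in Ioi 0, (1 - Real.exp (-(s * y))) * pr y =
      s * ∫ z in Ioi 0, Real.exp (-(s * z)) * Pib z := by
    rw [hJ, hK, ← hsB, ENNReal.toReal_mul, ENNReal.toReal_ofReal hs.le]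
  have goal6 : ψ s / (s - p) = s * (σ ^ 2 / 2 +
      ∫ z in Ioi 0, Real.exp (-(s * z)) * Pib z) := by
    rw [goal5, hJK]
    ring
  exact ⟨comp1, comp2, comp3, comp4, goal5, goal6⟩
end

section
/- For every α ∈ (0,1) and every s > 0: (s / Γ(1−α)) ∫_0^∞ e^{−sz} (e^{z} − 1)^{−α} dz = Γ(s+α)/Γ(s). -/
open MeasureTheory Filter Set Topology

/-- For every `α ∈ (0,1)` and every `s > 0`:
`(s/Γ(1-α)) ∫_0^∞ e^{-sz} (e^z - 1)^{-α} dz = Γ(s+α)/Γ(s)`. -/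
theorem stmt_11 (α : ℝ) (hα : α ∈ Ioo (0 : ℝ) 1) (s : ℝ) (hs : 0 < s) :
    s / Real.Gamma (1 - α) *
        ∫ z in Ioi (0 : ℝ), Real.exp (-(s * z)) * (Real.exp z - 1) ^ (-α) =
      Real.Gamma (s + α) / Real.Gamma s := by
  obtain ⟨hα0, hα1⟩ := hα
  have h1α : (0:ℝ) < 1 - α := by linarith
  -- change of variables t ↦ -log t
  have himg : (fun t : ℝ => -Real.log t) '' Ioo 0 1 = Ioi 0 := by
    ext z
    constructor
    · rintro ⟨t, ⟨ht0, ht1⟩, rfl⟩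
      simpa using Real.log_neg ht0 ht1
    · intro hz
      refine ⟨Real.exp (-z), ⟨Real.exp_pos _, ?_⟩, by simp [Real.log_exp]⟩
      exact Real.exp_lt_one_iff.2 (by simpa using (mem_Ioi.1 hz))
  have hderiv : ∀ t ∈ Ioo (0:ℝ) 1,
      HasDerivWithinAt (fun t : ℝ => -Real.log t) (-(1/t)) (Ioo 0 1) t := by
    intro t ht
    have := (Real.hasDerivAt_log (ne_of_gt ht.1)).neg
    rw [one_div]; exact this.hasDerivWithinAt
  have hinj : InjOn (fun t : ℝ => -Real.log t) (Ioo 0 1) := by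
    intro a ha b hb h
    have := Real.log_injOn_pos (mem_Ioi.2 ha.1) (mem_Ioi.2 hb.1)
    exact this (by linarith [neg_injective h])
  have key := integral_image_eq_integral_abs_deriv_smul measurableSet_Ioo hderiv hinj
      (fun z => Real.exp (-(s * z)) * (Real.exp z - 1) ^ (-α))
  rw [himg] at key
  have hcongr : ∫ t in Ioo (0:ℝ) 1,
      |(-(1/t))| • (Real.exp (-(s * -Real.log t)) * (Real.exp (-Real.log t) - 1) ^ (-α)) =
      ∫ t in Ioo (0:ℝ) 1, t ^ (s + α - 1) * (1 - t) ^ (-α) := by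
    apply setIntegral_congr_fun measurableSet_Ioo
    intro t ht
    obtain ⟨ht0, ht1⟩ := ht
    have hlt : Real.exp (-Real.log t) = t⁻¹ := by
      rw [Real.exp_neg, Real.exp_log ht0]
    have he : Real.exp (-(s * -Real.log t)) = t ^ s := by
      rw [Real.rpow_def_of_pos ht0]; congr 1; ring
    have hid : t⁻¹ - 1 = (1 - t) / t := by field_simp
    have habs : |(-(1/t))| = 1 / t := by
      rw [abs_neg, abs_of_pos (by positivity)]
    simp only [smul_eq_mul, habs, he, hlt, hid]
    have hts : t ^ (s + α - 1) = t ^ s * t ^ α * t⁻¹ := by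
      rw [show s + α - 1 = s + α + (-1) by ring, Real.rpow_add ht0, Real.rpow_add ht0,
        Real.rpow_neg_one]
    rw [Real.div_rpow (by linarith) ht0.le, Real.rpow_neg ht0.le α, div_inv_eq_mul, hts]
    ring
  rw [hcongr] at key
  -- relate to Beta
  set J : ℝ := ∫ t in Ioo (0:ℝ) 1, t ^ (s + α - 1) * (1 - t) ^ (-α) with hJ
  have hbeta : Complex.betaIntegral (↑(s + α)) (↑(1 - α)) = (J : ℂ) := by
    rw [Complex.betaIntegral]
    rw [hJ, ← integral_Ioc_eq_integral_Ioo,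
      ← intervalIntegral.integral_of_le (by norm_num : (0:ℝ) ≤ 1)]
    rw [← intervalIntegral.integral_ofReal]
    apply intervalIntegral.integral_congr
    intro x hx
    rw [uIcc_of_le (by norm_num)] at hx
    obtain ⟨hx0, hx1⟩ := hx
    simp only [Complex.ofReal_mul]
    rw [Complex.ofReal_cpow hx0, Complex.ofReal_cpow (by linarith : (0:ℝ) ≤ 1 - x)]
    push_cast
    rw [show (1:ℂ) - ↑α - 1 = -↑α by ring]
  have hGamma := Complex.Gamma_mul_Gamma_eq_betaIntegral
    (s := (↑(s + α) : ℂ)) (t := (↑(1 - α) : ℂ))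
    (by simpa using by positivity) (by simpa using h1α)
  rw [hbeta] at hGamma
  have hsum : (↑(s + α) : ℂ) + ↑(1 - α) = ((s + 1 : ℝ) : ℂ) := by push_cast; ring
  rw [hsum, Complex.Gamma_ofReal, Complex.Gamma_ofReal, Complex.Gamma_ofReal,
    ← Complex.ofReal_mul, ← Complex.ofReal_mul] at hGamma
  have hreal : Real.Gamma (s + α) * Real.Gamma (1 - α) = Real.Gamma (s + 1) * J :=
    mod_cast hGamma
  rw [key]
  have hG1 : 0 < Real.Gamma (1 - α) := Real.Gamma_pos_of_pos h1α
  have hGs : 0 < Real.Gamma s := Real.Gamma_pos_of_pos hs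
  rw [Real.Gamma_add_one (ne_of_gt hs)] at hreal
  field_simp
  nlinarith [hreal]
end

section
/- Let α ∈ (0,1), δ > 0, c₀ > 0, set γ := 1/(1−α), Ψ(s) := c₀ Γ(s+α)/Γ(s), z₀ := (1−α) c₀^{γ} δ^{αγ} and K := (γ^{1−α}/(c₀ δ^{α}))^{γ}. Suppose b : (0,∞) → (0,∞) satisfies the recursion b(r) = (r/Ψ(rδ)) · b(r−1) for all r > 1 and the log-convexity inequality b(q) ≤ b(p)^{(q−r)/(p−r)} b(r)^{(p−q)/(p−r)} whenever p ≥ q ≥ r > 1. Then the sequence a_n := b(nγ) satisfies a_n/a_{n−1} ∼ K · n^{(1−α)γ} = K·n as n → ∞ (with K = 1/z₀), and consequently the power series Σ_{n≥0} a_n z^n / n! converges for 0 < z < z₀ and diverges for z > z₀. -/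
open MeasureTheory Filter Set Topology
set_option maxHeartbeats 1000000

lemma wendel {α : ℝ} (hα0 : 0 < α) (hα1 : α < 1) :
    Tendsto (fun x : ℝ => Real.Gamma (x + α) / (Real.Gamma x * x ^ α)) atTop (𝓝 1) := by
  have h1α : 0 < 1 - α := by linarith
  have hlow : Tendsto (fun x : ℝ => (x / (x + α)) ^ (1 - α)) atTop (𝓝 1) := by
    have h1 : Tendsto (fun x : ℝ => x / (x + α)) atTop (𝓝 1) := by
      have h2 : Tendsto (fun x : ℝ => 1 - α / (x + α)) atTop (𝓝 1) := by
        have := (tendsto_inv_atTop_zero.comp (tendsto_atTop_add_const_right atTop α tendsto_id)).const_mul α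
        simpa [div_eq_mul_inv] using (tendsto_const_nhds.sub this)
      refine h2.congr' ?_
      filter_upwards [eventually_gt_atTop 0] with x hx
      field_simp
      ring
    have := h1.rpow (tendsto_const_nhds (x := 1 - α)) (Or.inl one_ne_zero)
    simpa using this
  refine tendsto_of_tendsto_of_tendsto_of_le_of_le' hlow tendsto_const_nhds ?_ ?_
  · filter_upwards [eventually_gt_atTop 0] with x hx
    -- lower bound: Γ(x+1) ≤ Γ(x+α)^α * Γ(x+α+1)^(1-α)
    have key := Real.Gamma_mul_add_mul_le_rpow_Gamma_mul_rpow_Gamma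
      (s := x + α) (t := x + α + 1) (a := α) (b := 1 - α)
      (by linarith) (by linarith) hα0 h1α (by ring)
    have harg : α * (x + α) + (1 - α) * (x + α + 1) = x + 1 := by ring
    rw [harg, Real.Gamma_add_one (ne_of_gt hx)] at key
    have hGxα : 0 < Real.Gamma (x + α) := Real.Gamma_pos_of_pos (by linarith)
    have hGx : 0 < Real.Gamma x := Real.Gamma_pos_of_pos hx
    have hrhs : Real.Gamma (x + α) ^ α * Real.Gamma (x + α + 1) ^ (1 - α)
        = Real.Gamma (x + α) * (x + α) ^ (1 - α) := by
      rw [show x + α + 1 = (x + α) + 1 by ring, Real.Gamma_add_one (by positivity),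
        Real.mul_rpow (by positivity) hGxα.le, ← mul_assoc, mul_comm (Real.Gamma (x+α) ^ α),
        mul_assoc, ← Real.rpow_add hGxα, mul_comm]
      norm_num
    rw [hrhs] at key
    -- key : x * Γ x ≤ Γ(x+α) * (x+α)^(1-α)
    rw [le_div_iff₀ (by positivity)]
    have hx' : (x / (x + α)) ^ (1 - α) * (Real.Gamma x * x ^ α)
        = (x * Real.Gamma x) / (x + α) ^ (1 - α) := by
      rw [Real.div_rpow hx.le (by positivity)]
      rw [div_mul_eq_mul_div, div_eq_div_iff (by positivity) (by positivity)]
      have hxx : x ^ (1 - α) * x ^ α = x := by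
        rw [← Real.rpow_add hx]; norm_num
      linear_combination (Real.Gamma x * (x + α) ^ (1 - α)) * hxx
    rw [hx', div_le_iff₀ (by positivity)]
    linarith [key]
  · filter_upwards [eventually_gt_atTop 0] with x hx
    have hGx : 0 < Real.Gamma x := Real.Gamma_pos_of_pos hx
    have key := Real.Gamma_mul_add_mul_le_rpow_Gamma_mul_rpow_Gamma
      (s := x) (t := x + 1) (a := 1 - α) (b := α) hx (by linarith) h1α hα0 (by ring)
    have harg : (1 - α) * x + α * (x + 1) = x + α := by ring
    rw [harg, Real.Gamma_add_one (ne_of_gt hx)] at key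
    have hrhs : Real.Gamma x ^ (1 - α) * (x * Real.Gamma x) ^ α = Real.Gamma x * x ^ α := by
      rw [Real.mul_rpow hx.le hGx.le, mul_comm (x ^ α), ← mul_assoc, ← Real.rpow_add hGx]
      norm_num
      try ring
    rw [hrhs] at key
    rw [div_le_one (by positivity)]
    exact key



/-- Moment growth and radius of convergence for the perpetual integral of a
stable subordinator. With `γ = 1/(1-α)`, `Ψ(s) = c₀Γ(s+α)/Γ(s)`,
`z₀ = (1-α)c₀^γ δ^{αγ}` and `K = (γ^{1-α}/(c₀δ^α))^γ`, if `b : (0,∞) → (0,∞)` satisfies the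
Bertoin–Yor recursion `b(r) = (r/Ψ(rδ)) b(r-1)` for `r > 1` and the Hölder log-convexity
inequality, then `a_n := b(nγ)` satisfies `a_{n+1}/a_n ∼ K(n+1)` (with `K = 1/z₀`), and
`Σ a_n z^n/n!` converges for `0 < z < z₀` and diverges for `z > z₀`. -/
theorem stmt_12 (α δ c₀ : ℝ) (hα : α ∈ Ioo (0 : ℝ) 1) (hδ : 0 < δ) (hc₀ : 0 < c₀)
    (γ : ℝ) (hγ : γ = 1 / (1 - α))
    (Ψ : ℝ → ℝ) (hΨ : ∀ s, Ψ s = c₀ * Real.Gamma (s + α) / Real.Gamma s)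
    (z₀ : ℝ) (hz₀ : z₀ = (1 - α) * c₀ ^ γ * δ ^ (α * γ))
    (K : ℝ) (hK : K = (γ ^ (1 - α) / (c₀ * δ ^ α)) ^ γ)
    (b : ℝ → ℝ) (hb_pos : ∀ r : ℝ, 0 < r → 0 < b r)
    (hrec : ∀ r : ℝ, 1 < r → b r = r / Ψ (r * δ) * b (r - 1))
    (hconv : ∀ p q r : ℝ, 1 < r → r ≤ q → q ≤ p → r < p →
      b q ≤ b p ^ ((q - r) / (p - r)) * b r ^ ((p - q) / (p - r))) :
    K * z₀ = 1 ∧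
    Tendsto (fun n : ℕ =>
        b (((n : ℝ) + 1) * γ) / b ((n : ℝ) * γ) / (K * ((n : ℝ) + 1)))
      atTop (𝓝 1) ∧
    (∀ z : ℝ, 0 < z → z < z₀ →
      Summable (fun n : ℕ => b ((n : ℝ) * γ) * z ^ n / (n.factorial : ℝ))) ∧
    (∀ z : ℝ, z₀ < z →
      ¬ Summable (fun n : ℕ => b ((n : ℝ) * γ) * z ^ n / (n.factorial : ℝ))) := by
  obtain ⟨hα0, hα1⟩ := hα
  have h1α : 0 < 1 - α := by linarith
  have hγpos : 0 < γ := by rw [hγ]; positivity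
  have hγ1 : 1 < γ := by rw [hγ, lt_div_iff₀ h1α]; linarith
  have hγα : (1 - α) * γ = 1 := by rw [hγ]; field_simp
  have hKpos : 0 < K := by
    rw [hK]
    exact Real.rpow_pos_of_pos (div_pos (Real.rpow_pos_of_pos hγpos _)
      (mul_pos hc₀ (Real.rpow_pos_of_pos hδ _))) _
  -- first conjunct
  have hKz₀ : K * z₀ = 1 := by
    have h1 : (γ ^ (1 - α) / (c₀ * δ ^ α)) ^ γ = γ / (c₀ ^ γ * δ ^ (α * γ)) := by
      rw [Real.div_rpow (Real.rpow_pos_of_pos hγpos _).le (by positivity),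
        Real.mul_rpow hc₀.le (Real.rpow_pos_of_pos hδ _).le,
        ← Real.rpow_mul hγpos.le, ← Real.rpow_mul hδ.le, hγα, Real.rpow_one]
    rw [hK, hz₀, h1]
    have hne : c₀ ^ γ * δ ^ (α * γ) ≠ 0 := by positivity
    field_simp
    linear_combination hγα
  -- positivity of Ψ
  have hΨpos : ∀ s : ℝ, 0 < s → 0 < Ψ s := by
    intro s hs
    rw [hΨ]
    exact div_pos (mul_pos hc₀ (Real.Gamma_pos_of_pos (by linarith))) (Real.Gamma_pos_of_pos hs)
  set g : ℝ → ℝ := fun s => Real.log (b s) with hg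
  set φ : ℝ → ℝ := fun s => Real.log (s / Ψ (s * δ)) with hφ
  have hstep : ∀ s : ℝ, 1 < s → g s - g (s - 1) = φ s := by
    intro s hs
    have hb2 : 0 < b (s - 1) := hb_pos _ (by linarith)
    have hq : 0 < s / Ψ (s * δ) := div_pos (by linarith) (hΨpos _ (mul_pos (by linarith) hδ))
    simp only [hg, hφ]
    rw [hrec s hs, Real.log_mul (ne_of_gt hq) (ne_of_gt hb2)]
    ring
  -- log-convexity of g
  have hgconv : ∀ p q r : ℝ, 1 < r → r ≤ q → q ≤ p → r < p →
      (p - r) * g q ≤ (q - r) * g p + (p - q) * g r := by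
    intro p q r h1 h2 h3 h4
    have hbp : 0 < b p := hb_pos _ (by linarith)
    have hbq : 0 < b q := hb_pos _ (by linarith)
    have hbr : 0 < b r := hb_pos _ (by linarith)
    have := hconv p q r h1 h2 h3 h4
    have hlog := Real.log_le_log hbq this
    rw [Real.log_mul (Real.rpow_pos_of_pos hbp _).ne' (Real.rpow_pos_of_pos hbr _).ne',
      Real.log_rpow hbp, Real.log_rpow hbr] at hlog
    have hpr : 0 < p - r := by linarith
    simp only [hg]
    rw [← sub_nonneg] at hlog ⊢
    have : (q - r) / (p - r) * Real.log (b p) + (p - q) / (p - r) * Real.log (b r)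
        - Real.log (b q) = ((q - r) * Real.log (b p) + (p - q) * Real.log (b r)
        - (p - r) * Real.log (b q)) / (p - r) := by field_simp <;> ring
    rw [this] at hlog
    have := (div_nonneg_iff.mp hlog)
    rcases this with ⟨h, _⟩ | ⟨_, h⟩
    · linarith
    · linarith
  -- the two slope inequalities
  have hlo : ∀ n : ℕ, 2 ≤ n →
      γ * φ ((n : ℝ) * γ) ≤ g (((n : ℝ) + 1) * γ) - g ((n : ℝ) * γ) := by
    intro n hn
    have hn2 : (2 : ℝ) ≤ (n : ℝ) := by exact_mod_cast hn
    have hr1 : 1 < (n : ℝ) * γ - 1 := by nlinarith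
    have hkey := hgconv (((n : ℝ) + 1) * γ) ((n : ℝ) * γ) ((n : ℝ) * γ - 1)
      hr1 (by linarith) (by nlinarith) (by nlinarith)
    have hs := hstep ((n : ℝ) * γ) (by nlinarith)
    nlinarith [hkey, hs]
  have hhi : ∀ n : ℕ, 1 ≤ n →
      g (((n : ℝ) + 1) * γ) - g ((n : ℝ) * γ) ≤ γ * φ (((n : ℝ) + 1) * γ + 1) := by
    intro n hn
    have hn1 : (1 : ℝ) ≤ (n : ℝ) := by exact_mod_cast hn
    have hkey := hgconv (((n : ℝ) + 1) * γ + 1) (((n : ℝ) + 1) * γ) ((n : ℝ) * γ)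
      (by nlinarith) (by nlinarith) (by linarith) (by nlinarith)
    have hs := hstep (((n : ℝ) + 1) * γ + 1) (by nlinarith)
    have heq : ((n : ℝ) + 1) * γ + 1 - 1 = ((n : ℝ) + 1) * γ := by ring
    rw [heq] at hs
    nlinarith [hkey, hs]
  -- asymptotics of φ
  set F : ℝ → ℝ := fun s => φ s - ((1 - α) * Real.log s - α * Real.log δ - Real.log c₀)
    with hFdef
  have hF : Tendsto F atTop (𝓝 0) := by
    have W := wendel hα0 hα1
    have W2 : Tendsto (fun s : ℝ =>
        Real.Gamma (s * δ + α) / (Real.Gamma (s * δ) * (s * δ) ^ α)) atTop (𝓝 1) :=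
      W.comp (tendsto_id.atTop_mul_const hδ)
    have W3 : Tendsto (fun s : ℝ =>
        -Real.log (Real.Gamma (s * δ + α) / (Real.Gamma (s * δ) * (s * δ) ^ α)))
        atTop (𝓝 0) := by
      have := ((Real.continuousAt_log one_ne_zero).tendsto.comp W2).neg
      rw [Real.log_one, neg_zero] at this
      exact this
    refine W3.congr' ?_
    filter_upwards [eventually_gt_atTop 0] with s hs
    have hsδ : 0 < s * δ := mul_pos hs hδ
    have hG1 : 0 < Real.Gamma (s * δ) := Real.Gamma_pos_of_pos hsδ
    have hG2 : 0 < Real.Gamma (s * δ + α) := Real.Gamma_pos_of_pos (by linarith)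
    have hrp : 0 < (s * δ) ^ α := Real.rpow_pos_of_pos hsδ _
    have hΨ' : 0 < Ψ (s * δ) := hΨpos _ hsδ
    have e1 : -Real.log (Real.Gamma (s * δ + α) / (Real.Gamma (s * δ) * (s * δ) ^ α))
        = Real.log (Real.Gamma (s * δ)) + α * (Real.log s + Real.log δ)
          - Real.log (Real.Gamma (s * δ + α)) := by
      rw [Real.log_div hG2.ne' (mul_pos hG1 hrp).ne', Real.log_mul hG1.ne' hrp.ne',
        Real.log_rpow hsδ, Real.log_mul hs.ne' hδ.ne']
      ring
    have e2 : φ s = Real.log s - (Real.log c₀ + Real.log (Real.Gamma (s * δ + α))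
        - Real.log (Real.Gamma (s * δ))) := by
      simp only [hφ]
      rw [Real.log_div hs.ne' hΨ'.ne', hΨ (s * δ),
        Real.log_div (mul_pos hc₀ hG2).ne' hG1.ne', Real.log_mul hc₀.ne' hG2.ne']
    simp only [hFdef, e1, e2]
    ring
  -- log K
  have hlogK : Real.log K = Real.log γ - γ * Real.log c₀ - γ * (α * Real.log δ) := by
    rw [hK, Real.log_rpow (div_pos (Real.rpow_pos_of_pos hγpos _)
        (mul_pos hc₀ (Real.rpow_pos_of_pos hδ _))),
      Real.log_div (by positivity) (by positivity),
      Real.log_mul (ne_of_gt hc₀) (by positivity),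
      Real.log_rpow hγpos, Real.log_rpow hδ]
    linear_combination (Real.log γ) * hγα
  -- convergence of E n := D n - log (K * (n+1)) to 0
  have hE : Tendsto (fun n : ℕ =>
      (g (((n : ℝ) + 1) * γ) - g ((n : ℝ) * γ)) - Real.log (K * ((n : ℝ) + 1)))
      atTop (𝓝 0) := by
    -- lower sequence
    have hT1 : Tendsto (fun n : ℕ =>
        γ * F ((n : ℝ) * γ) + (Real.log n - Real.log ((n : ℝ) + 1))) atTop (𝓝 0) := by
      have ha : Tendsto (fun n : ℕ => γ * F ((n : ℝ) * γ)) atTop (𝓝 0) := by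
        have := (hF.comp (tendsto_natCast_atTop_atTop.atTop_mul_const hγpos)).const_mul γ
        simpa using this
      have hb : Tendsto (fun n : ℕ => Real.log n - Real.log ((n : ℝ) + 1)) atTop (𝓝 0) := by
        have h1 : Tendsto (fun n : ℕ => (1 : ℝ) + 1 / n) atTop (𝓝 1) := by
          have := tendsto_one_div_atTop_nhds_zero_nat (𝕜 := ℝ)
          simpa using tendsto_const_nhds.add this
        have h2 := ((Real.continuousAt_log one_ne_zero).tendsto.comp h1).neg
        rw [Real.log_one, neg_zero] at h2
        refine h2.congr' ?_
        filter_upwards [eventually_ge_atTop 1] with n hn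
        have hn1 : (1 : ℝ) ≤ (n : ℝ) := by exact_mod_cast hn
        have : (1 : ℝ) + 1 / n = ((n : ℝ) + 1) / n := by field_simp
        simp only [Function.comp_apply, this]
        rw [Real.log_div (by positivity) (by positivity)]
        ring
      simpa using ha.add hb
    -- upper sequence
    have hT2 : Tendsto (fun n : ℕ =>
        γ * F (((n : ℝ) + 1) * γ + 1)
          + (Real.log (((n : ℝ) + 1) * γ + 1) - Real.log (γ * ((n : ℝ) + 1)))) atTop (𝓝 0) := by
      have hp : Tendsto (fun n : ℕ => ((n : ℝ) + 1) * γ + 1) atTop atTop := by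
        apply tendsto_atTop_add_const_right
        apply Tendsto.atTop_mul_const hγpos
        exact tendsto_atTop_add_const_right _ _ tendsto_natCast_atTop_atTop
      have ha : Tendsto (fun n : ℕ => γ * F (((n : ℝ) + 1) * γ + 1)) atTop (𝓝 0) := by
        have := (hF.comp hp).const_mul γ
        simpa using this
      have hb : Tendsto (fun n : ℕ =>
          Real.log (((n : ℝ) + 1) * γ + 1) - Real.log (γ * ((n : ℝ) + 1))) atTop (𝓝 0) := by
        have h0 : Tendsto (fun n : ℕ => γ * ((n : ℝ) + 1)) atTop atTop := by
          rw [show (fun n : ℕ => γ * ((n : ℝ) + 1)) = fun n : ℕ => ((n : ℝ) + 1) * γ by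
            funext n; ring]
          exact (tendsto_atTop_add_const_right _ _ tendsto_natCast_atTop_atTop).atTop_mul_const
            hγpos
        have h1 : Tendsto (fun n : ℕ => (1 : ℝ) + 1 / (γ * ((n : ℝ) + 1))) atTop (𝓝 1) := by
          have := (tendsto_const_nhds (x := (1:ℝ))).add (tendsto_inv_atTop_zero.comp h0)
          simpa [one_div] using this
        have h2 := (Real.continuousAt_log one_ne_zero).tendsto.comp h1
        rw [Real.log_one] at h2
        refine h2.congr' ?_
        filter_upwards with n
        have hgn : 0 < γ * ((n : ℝ) + 1) := mul_pos hγpos (by positivity)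
        have : (1 : ℝ) + 1 / (γ * ((n : ℝ) + 1))
            = (((n : ℝ) + 1) * γ + 1) / (γ * ((n : ℝ) + 1)) := by field_simp
        simp only [Function.comp_apply, this]
        rw [Real.log_div (by positivity) hgn.ne']
      simpa using ha.add hb
    refine tendsto_of_tendsto_of_tendsto_of_le_of_le' hT1 hT2 ?_ ?_
    · filter_upwards [eventually_ge_atTop 2] with n hn
      have hn2 : (2 : ℝ) ≤ (n : ℝ) := by exact_mod_cast hn
      have hid : γ * φ ((n : ℝ) * γ) - Real.log (K * ((n : ℝ) + 1))
          = γ * F ((n : ℝ) * γ) + (Real.log n - Real.log ((n : ℝ) + 1)) := by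
        have hphi : φ ((n : ℝ) * γ) = F ((n : ℝ) * γ)
            + ((1 - α) * Real.log ((n : ℝ) * γ) - α * Real.log δ - Real.log c₀) := by
          simp only [hFdef]; ring
        rw [hphi, Real.log_mul hKpos.ne' (by positivity), hlogK,
          Real.log_mul (by positivity : ((n : ℝ)) ≠ 0) hγpos.ne']
        linear_combination (Real.log n + Real.log γ) * hγα
      rw [← hid]
      have := hlo n hn
      linarith
    · filter_upwards [eventually_ge_atTop 2] with n hn
      have hn2 : (2 : ℝ) ≤ (n : ℝ) := by exact_mod_cast hn
      have hid : γ * φ (((n : ℝ) + 1) * γ + 1) - Real.log (K * ((n : ℝ) + 1))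
          = γ * F (((n : ℝ) + 1) * γ + 1)
            + (Real.log (((n : ℝ) + 1) * γ + 1) - Real.log (γ * ((n : ℝ) + 1))) := by
        have hphi : φ (((n : ℝ) + 1) * γ + 1) = F (((n : ℝ) + 1) * γ + 1)
            + ((1 - α) * Real.log (((n : ℝ) + 1) * γ + 1) - α * Real.log δ - Real.log c₀) := by
          simp only [hFdef]; ring
        rw [hphi, Real.log_mul hKpos.ne' (by positivity), hlogK,
          Real.log_mul hγpos.ne' (by positivity : ((n : ℝ) + 1) ≠ 0)]
        linear_combination (Real.log (((n : ℝ) + 1) * γ + 1)) * hγα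
      rw [← hid]
      have := hhi n (by omega)
      linarith
  have hmain : Tendsto (fun n : ℕ =>
      b (((n : ℝ) + 1) * γ) / b ((n : ℝ) * γ) / (K * ((n : ℝ) + 1))) atTop (𝓝 1) := by
    have := (Real.continuous_exp.tendsto 0).comp hE
    rw [Real.exp_zero] at this
    refine this.congr' ?_
    filter_upwards [eventually_ge_atTop 1] with n hn
    have hn1 : (1 : ℝ) ≤ (n : ℝ) := by exact_mod_cast hn
    have hb1 : 0 < b (((n : ℝ) + 1) * γ) := hb_pos _ (mul_pos (by positivity) hγpos)
    have hb2 : 0 < b ((n : ℝ) * γ) := hb_pos _ (mul_pos (by linarith) hγpos)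
    have hKn : 0 < K * ((n : ℝ) + 1) := mul_pos hKpos (by positivity)
    simp only [Function.comp_apply, hg]
    rw [Real.exp_sub, Real.exp_sub, Real.exp_log hb1, Real.exp_log hb2, Real.exp_log hKn]
  have hz₀pos : 0 < z₀ := by
    rcases mul_pos_iff.mp (show (0:ℝ) < K * z₀ by rw [hKz₀]; exact one_pos) with h | h
    · exact h.2
    · linarith [hKpos, h.1]
  have hrat : ∀ z : ℝ, 0 < z → Tendsto (fun n : ℕ =>
      ‖b ((((n+1 : ℕ)) : ℝ) * γ) * z ^ (n+1) / ((n+1).factorial : ℝ)‖ /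
      ‖b ((n : ℝ) * γ) * z ^ n / (n.factorial : ℝ)‖) atTop (𝓝 (K * z)) := by
    intro z hz
    have h := hmain.mul_const (K * z)
    rw [one_mul] at h
    refine h.congr' ?_
    filter_upwards [eventually_ge_atTop 1] with n hn
    have hn1 : (1 : ℝ) ≤ (n : ℝ) := by exact_mod_cast hn
    have hb1 : 0 < b (((n : ℝ) + 1) * γ) := hb_pos _ (mul_pos (by positivity) hγpos)
    have hb2 : 0 < b ((n : ℝ) * γ) := hb_pos _ (mul_pos (by linarith) hγpos)
    have hf1 : (0 : ℝ) < (n.factorial : ℝ) := by exact_mod_cast n.factorial_pos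
    have hc : (((n+1 : ℕ)) : ℝ) = (n : ℝ) + 1 := by push_cast; ring
    rw [hc, Nat.factorial_succ, Nat.cast_mul]
    rw [Real.norm_eq_abs, Real.norm_eq_abs,
      abs_of_pos (by positivity), abs_of_pos (by positivity)]
    push_cast
    field_simp
    ring
  refine ⟨hKz₀, hmain, ?_, ?_⟩
  · intro z hz0 hzz₀
    have hKz : K * z < 1 := by
      calc K * z < K * z₀ := by exact mul_lt_mul_of_pos_left hzz₀ hKpos
        _ = 1 := hKz₀
    refine summable_of_ratio_test_tendsto_lt_one hKz ?_ (hrat z hz0)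
    filter_upwards [eventually_ge_atTop 1] with n hn
    have hn1 : (1 : ℝ) ≤ (n : ℝ) := by exact_mod_cast hn
    have hb2 : 0 < b ((n : ℝ) * γ) := hb_pos _ (mul_pos (by linarith) hγpos)
    have hf1 : (0 : ℝ) < (n.factorial : ℝ) := by exact_mod_cast n.factorial_pos
    positivity
  · intro z hzz₀
    have hz0 : 0 < z := lt_trans hz₀pos hzz₀
    have hKz : 1 < K * z := by
      calc (1 : ℝ) = K * z₀ := hKz₀.symm
        _ < K * z := mul_lt_mul_of_pos_left hzz₀ hKpos
    exact not_summable_of_ratio_test_tendsto_gt_one hKz (hrat z hz0)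
end

section
/- Let 0 < α < 1 and β > α, and define c_n := Π_{k=1}^{n} Γ(k(β−α)+1) / Γ(k(β−α)+α) for n ≥ 1. Then the sequence (c_n) satisfies the Carleman condition: Σ_{n≥1} c_n^{−1/(2n)} = ∞. -/
open MeasureTheory Filter Set Topology

/-- Gautschi-type inequality via log-convexity of Γ. -/
lemma gautschi_aux {α x : ℝ} (hα0 : 0 < α) (hα1 : α < 1) (hx : 0 < x) :
    Real.Gamma (x + 1) / Real.Gamma (x + α) ≤ (x + 1) ^ (1 - α) := by
  have h2 : (0 : ℝ) < 2 - α := by linarith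
  set t : ℝ := 1 / (2 - α) with ht_def
  have ht : 0 < t := by positivity
  have ht1 : t < 1 := by
    rw [ht_def, div_lt_one h2]; linarith
  have hA : 0 < Real.Gamma (x + 1) := Real.Gamma_pos_of_pos (by linarith)
  have hB : 0 < Real.Gamma (x + α) := Real.Gamma_pos_of_pos (by linarith)
  have key := Real.Gamma_mul_add_mul_le_rpow_Gamma_mul_rpow_Gamma
    (s := x + α) (t := x + 2) (a := t) (b := 1 - t)
    (by linarith) (by linarith) ht (by linarith)
    (by ring)
  have hsum : t * (x + α) + (1 - t) * (x + 2) = x + 1 := by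
    rw [ht_def]; field_simp; ring
  rw [hsum] at key
  have hG2 : Real.Gamma (x + 2) = (x + 1) * Real.Gamma (x + 1) := by
    rw [show x + 2 = (x + 1) + 1 by ring, Real.Gamma_add_one (by positivity)]
  rw [hG2, Real.mul_rpow (by positivity) hA.le] at key
  -- cancel A^(1-t)
  have hsplit : Real.Gamma (x + 1) =
      Real.Gamma (x + 1) ^ t * Real.Gamma (x + 1) ^ (1 - t) := by
    rw [← Real.rpow_add hA]; simp
  have key2 : Real.Gamma (x + 1) ^ t ≤
      (x + 1) ^ (1 - t) * Real.Gamma (x + α) ^ t := by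
    have hpos : 0 < Real.Gamma (x + 1) ^ (1 - t) := Real.rpow_pos_of_pos hA _
    rw [← mul_le_mul_iff_of_pos_right hpos]
    calc Real.Gamma (x + 1) ^ t * Real.Gamma (x + 1) ^ (1 - t)
        = Real.Gamma (x + 1) := hsplit.symm
      _ ≤ Real.Gamma (x + α) ^ t * ((x + 1) ^ (1 - t) * Real.Gamma (x + 1) ^ (1 - t)) := key
      _ = (x + 1) ^ (1 - t) * Real.Gamma (x + α) ^ t * Real.Gamma (x + 1) ^ (1 - t) := by ring
  -- raise to power 1/t
  have key3 := Real.rpow_le_rpow (by positivity) key2 (le_of_lt (by positivity : (0:ℝ) < 1 / t))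
  rw [← Real.rpow_mul hA.le, mul_one_div_cancel ht.ne', Real.rpow_one,
    Real.mul_rpow (by positivity) (by positivity),
    ← Real.rpow_mul (by positivity : (0:ℝ) ≤ x + 1),
    ← Real.rpow_mul hB.le, mul_one_div_cancel ht.ne', Real.rpow_one] at key3
  have hexp : (1 - t) * (1 / t) = 1 - α := by
    rw [ht_def]; field_simp; ring
  rw [hexp] at key3
  rw [div_le_iff₀ hB]
  linarith [key3]

/-- For `0 < α < 1` and `β > α`, the moment sequence
`c_n := ∏_{k=1}^n Γ(k(β-α)+1)/Γ(k(β-α)+α)` satisfies the Carleman condition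
`Σ_{n≥1} c_n^{-1/(2n)} = ∞`. -/
theorem stmt_13 (α β : ℝ) (hα0 : 0 < α) (hα1 : α < 1) (hβ : α < β) :
    ¬ Summable (fun n : ℕ =>
      (∏ k ∈ Finset.Icc 1 (n + 1),
          Real.Gamma ((k : ℝ) * (β - α) + 1) / Real.Gamma ((k : ℝ) * (β - α) + α))
        ^ (-(1 : ℝ) / (2 * ((n : ℝ) + 1)))) := by
  set d : ℝ := β - α with hd_def
  have hd : 0 < d := by simp [hd_def]; linarith
  set s : ℝ := (1 - α) / 2 with hs_def
  have hs0 : 0 < s := by rw [hs_def]; linarith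
  have hs1 : s < 1 := by rw [hs_def]; linarith
  -- the comparison sequence
  set g : ℕ → ℝ := fun n => ((d + 1) * ((n : ℝ) + 1)) ^ (-s) with hg_def
  have hg_not : ¬ Summable g := by
    intro hg
    have h1 : Summable (fun n : ℕ => ((n : ℝ) + 1) ^ (-s)) := by
      have hc : (0 : ℝ) < (d + 1) ^ (-s) := Real.rpow_pos_of_pos (by linarith) _
      have := hg.mul_left ((d + 1) ^ (-s))⁻¹
      refine this.congr fun n => ?_
      rw [hg_def]
      simp only
      rw [Real.mul_rpow (by linarith) (by positivity), ← mul_assoc,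
        inv_mul_cancel₀ hc.ne', one_mul]
    have h2 : Summable (fun n : ℕ => ((n : ℕ) : ℝ) ^ (-s)) := by
      rw [← summable_nat_add_iff 1]
      refine h1.congr fun n => ?_
      push_cast
      ring_nf
    have := Real.summable_nat_rpow.mp h2
    linarith
  intro h
  apply hg_not
  refine Summable.of_nonneg_of_le (fun n => by positivity) (fun n => ?_) h
  -- bound g n ≤ term n
  set M : ℝ := ((n : ℝ) + 1) * d + 1 with hM_def
  have hM1 : (1 : ℝ) ≤ M := by
    rw [hM_def]; nlinarith [Nat.cast_nonneg (α := ℝ) n]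
  have hM0 : (0 : ℝ) < M := by linarith
  -- product bound
  have hprod_pos : 0 < ∏ k ∈ Finset.Icc 1 (n + 1),
      Real.Gamma ((k : ℝ) * d + 1) / Real.Gamma ((k : ℝ) * d + α) := by
    apply Finset.prod_pos
    intro k hk
    have hk1 : 1 ≤ k := (Finset.mem_Icc.mp hk).1
    have hkd : 0 < (k : ℝ) * d := by
      have : (1 : ℝ) ≤ (k : ℝ) := by exact_mod_cast hk1
      nlinarith
    exact div_pos (Real.Gamma_pos_of_pos (by linarith)) (Real.Gamma_pos_of_pos (by linarith))
  have hprod_le : (∏ k ∈ Finset.Icc 1 (n + 1),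
      Real.Gamma ((k : ℝ) * d + 1) / Real.Gamma ((k : ℝ) * d + α))
      ≤ (M ^ (1 - α)) ^ (n + 1) := by
    have hcard : (Finset.Icc 1 (n + 1)).card = n + 1 := by
      rw [Nat.card_Icc]; omega
    calc (∏ k ∈ Finset.Icc 1 (n + 1),
          Real.Gamma ((k : ℝ) * d + 1) / Real.Gamma ((k : ℝ) * d + α))
        ≤ ∏ _k ∈ Finset.Icc 1 (n + 1), M ^ (1 - α) := by
          apply Finset.prod_le_prod
          · intro k hk
            have hk1 : 1 ≤ k := (Finset.mem_Icc.mp hk).1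
            have hkd : 0 < (k : ℝ) * d := by
              have : (1 : ℝ) ≤ (k : ℝ) := by exact_mod_cast hk1
              nlinarith
            exact le_of_lt (div_pos (Real.Gamma_pos_of_pos (by linarith))
              (Real.Gamma_pos_of_pos (by linarith)))
          · intro k hk
            obtain ⟨hk1, hk2⟩ := Finset.mem_Icc.mp hk
            have hkd : 0 < (k : ℝ) * d := by
              have : (1 : ℝ) ≤ (k : ℝ) := by exact_mod_cast hk1
              nlinarith
            calc Real.Gamma ((k : ℝ) * d + 1) / Real.Gamma ((k : ℝ) * d + α)
                ≤ ((k : ℝ) * d + 1) ^ (1 - α) := gautschi_aux hα0 hα1 hkd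
              _ ≤ M ^ (1 - α) := by
                  apply Real.rpow_le_rpow (by positivity) _ (by linarith)
                  rw [hM_def]
                  have : (k : ℝ) ≤ (n : ℝ) + 1 := by exact_mod_cast hk2
                  nlinarith
      _ = (M ^ (1 - α)) ^ (n + 1) := by rw [Finset.prod_const, hcard]
  -- now the exponent manipulation
  have hstep1 : ((M ^ (1 - α)) ^ (n + 1) : ℝ) ^ (-(1 : ℝ) / (2 * ((n : ℝ) + 1)))
      ≤ (∏ k ∈ Finset.Icc 1 (n + 1),
          Real.Gamma ((k : ℝ) * d + 1) / Real.Gamma ((k : ℝ) * d + α))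
        ^ (-(1 : ℝ) / (2 * ((n : ℝ) + 1))) := by
    apply Real.rpow_le_rpow_of_nonpos hprod_pos hprod_le
    apply div_nonpos_of_nonpos_of_nonneg <;> [norm_num; positivity]
  have hn1 : ((n : ℝ) + 1) ≠ 0 := by positivity
  have hstep2 : ((M ^ (1 - α)) ^ (n + 1) : ℝ) ^ (-(1 : ℝ) / (2 * ((n : ℝ) + 1)))
      = M ^ (-s) := by
    rw [← Real.rpow_natCast (M ^ (1 - α)) (n + 1), ← Real.rpow_mul hM0.le,
      ← Real.rpow_mul hM0.le]
    congr 1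
    push_cast
    rw [hs_def]
    field_simp
  have hstep3 : g n ≤ M ^ (-s) := by
    rw [hg_def]
    apply Real.rpow_le_rpow_of_nonpos (by positivity) _ (by linarith)
    rw [hM_def]
    nlinarith [Nat.cast_nonneg (α := ℝ) n]
  calc g n ≤ M ^ (-s) := hstep3
    _ = ((M ^ (1 - α)) ^ (n + 1) : ℝ) ^ (-(1 : ℝ) / (2 * ((n : ℝ) + 1))) := hstep2.symm
    _ ≤ _ := hstep1
end

section
/- Let α ∈ (0,1) and let ψ : (0,∞) → (−∞,0) be continuous with −ψ regularly varying at 0 with index α, and assume ∫_0^1 du/(−ψ(u)) < ∞. Define Φ(w) := ∫_0^w du/(−ψ(u)) (finite, continuous and strictly increasing near 0), let v denote the inverse of Φ on a right neighbourhood of 0, and set φ(x) := Φ(1/x) = ∫_0^{1/x} du/(−ψ(u)) for large x. Then for every fixed t > 0: x · v( t·φ(x) ) → t^{1/(1−α)} as x → ∞, and consequently exp( −x·v(t·φ(x)) ) → exp( −t^{1/(1−α)} ) as x → ∞. (In the CSBP interpretation, v(s) = u_s(0+) and exp(−x v(tφ(x))) = P_x(T_∞^+ / φ(x) > t), so the renormalized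 explosion time T_∞^+/φ(x) converges in law to the Weibull distribution with shape parameter 1/(1−α).) -/
open MeasureTheory Filter Set Topology

/-- Let `α ∈ (0,1)`, `ψ : (0,∞) → (-∞,0)` continuous with `-ψ` regularly
varying at `0` with index `α` and `∫_0^1 du/(-ψ(u)) < ∞`. With `Φ(w) := ∫_0^w du/(-ψ(u))`,
`v` the inverse of `Φ` on a right neighbourhood of `0`, and `φ(x) := Φ(1/x)`, one has for every
`t > 0`: `x · v(t·φ(x)) → t^{1/(1-α)}` and `exp(-x·v(t·φ(x))) → exp(-t^{1/(1-α)})` as `x → ∞`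
(the Weibull limit of the renormalized explosion time of a CSBP). -/
theorem stmt_18 (α : ℝ) (hα : α ∈ Ioo (0 : ℝ) 1)
    (ψ : ℝ → ℝ) (hψ_cont : ContinuousOn ψ (Ioi 0))
    (hψ_neg : ∀ s : ℝ, 0 < s → ψ s < 0)
    (hψ_rv : ∀ c : ℝ, 0 < c →
      Tendsto (fun s => ψ (c * s) / ψ s) (𝓝[>] 0) (𝓝 (c ^ α)))
    (hint : IntegrableOn (fun u => 1 / (-ψ u)) (Ioo 0 1))
    (Φ : ℝ → ℝ) (hΦ : ∀ w : ℝ, 0 < w → Φ w = ∫ u in Ioo 0 w, 1 / (-ψ u))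
    (v : ℝ → ℝ) (hv : ∀ᶠ w in 𝓝[>] (0 : ℝ), 0 < v w ∧ Φ (v w) = w) :
    ∀ t : ℝ, 0 < t →
      Tendsto (fun x => x * v (t * Φ (1 / x))) atTop (𝓝 (t ^ (1 / (1 - α)))) ∧
      Tendsto (fun x => Real.exp (-(x * v (t * Φ (1 / x))))) atTop
        (𝓝 (Real.exp (-(t ^ (1 / (1 - α)))))) := by
  obtain ⟨hα0, hα1⟩ := hα
  have h1α : (0:ℝ) < 1 - α := by linarith
  set g : ℝ → ℝ := fun u => 1 / (-ψ u) with hg_def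
  have hg_pos : ∀ u : ℝ, 0 < u → 0 < g u := by
    intro u hu
    have := hψ_neg u hu
    simp only [hg_def]
    exact div_pos one_pos (by linarith)
  have hΦ' : ∀ w : ℝ, 0 < w → Φ w = ∫ u in Ioo 0 w, g u := hΦ
  have hint' : IntegrableOn g (Ioo 0 1) := hint
  have hgint : ∀ w : ℝ, 0 < w → w ≤ 1 → IntegrableOn g (Ioo 0 w) := by
    intro w h1 h2
    exact hint'.mono_set (Ioo_subset_Ioo le_rfl h2)
  have hae : ∀ w : ℝ, 0 ≤ᵐ[volume.restrict (Ioo 0 w)] g := by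
    intro w
    exact (ae_restrict_iff' measurableSet_Ioo).2
      (Eventually.of_forall fun u hu => (hg_pos u hu.1).le)
  have hΦ_le : ∀ a b : ℝ, 0 < a → a ≤ b → IntegrableOn g (Ioo 0 b) → Φ a ≤ Φ b := by
    intro a b ha hab hib
    rw [hΦ' a ha, hΦ' b (ha.trans_le hab)]
    exact setIntegral_mono_set hib (hae b) ((Ioo_subset_Ioo le_rfl hab).eventuallyLE)
  have hΦ_pos : ∀ w : ℝ, 0 < w → IntegrableOn g (Ioo 0 w) → 0 < Φ w := by
    intro w hw hi
    rw [hΦ' w hw, setIntegral_pos_iff_support_of_nonneg_ae (hae w) hi]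
    have hsub : Ioo 0 w ⊆ Function.support g ∩ Ioo 0 w :=
      fun u hu => ⟨(hg_pos u hu.1).ne', hu⟩
    calc (0:ENNReal) < volume (Ioo 0 w) := by
          rw [Real.volume_Ioo]; exact ENNReal.ofReal_pos.mpr (by linarith)
      _ ≤ volume (Function.support g ∩ Ioo 0 w) := measure_mono hsub
  have hΦ_undef : ∀ w : ℝ, 0 < w → ¬ IntegrableOn g (Ioo 0 w) → Φ w = 0 := by
    intro w hw h
    rw [hΦ' w hw]
    exact integral_undef h
  -- Φ tends to 0 at 0+
  have hΦ0 : Tendsto Φ (𝓝[>] (0:ℝ)) (𝓝 0) := by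
    have hIcc : IntegrableOn g (Icc 0 1) := (integrableOn_Icc_iff_integrableOn_Ioo (f := g)).2 hint'
    have hcont := intervalIntegral.continuousOn_primitive (f := g) (a := (0:ℝ)) (b := 1)
      (μ := volume) hIcc
    have h0 : (∫ u in Ioc (0:ℝ) 0, g u) = 0 := by simp
    have htd : Tendsto (fun x => ∫ u in Ioc (0:ℝ) x, g u) (𝓝[Icc 0 1] 0) (𝓝 0) := by
      have := (hcont 0 (by constructor <;> norm_num)).tendsto
      rwa [h0] at this
    have hmono : 𝓝[>] (0:ℝ) = 𝓝[Ioo (0:ℝ) 1] 0 :=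
      (nhdsWithin_Ioo_eq_nhdsGT one_pos).symm
    rw [hmono]
    refine Tendsto.congr' ?_ (htd.mono_left (nhdsWithin_mono _ Ioo_subset_Icc_self))
    filter_upwards [self_mem_nhdsWithin] with w hw
    rw [hΦ' w hw.1, integral_Ioc_eq_integral_Ioo]
  -- key regular variation estimate for Φ
  have key : ∀ c : ℝ, 0 < c → ∀ ε : ℝ, 0 < ε →
      ∀ᶠ w in 𝓝[>] (0:ℝ), |Φ (c*w) - c^(1-α) * Φ w| ≤ ε * Φ w := by
    intro c hc ε hε
    have hcα : (0:ℝ) < c ^ α := Real.rpow_pos_of_pos hc α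
    have hrat : Tendsto (fun u => c * (ψ (c*u) / ψ u)⁻¹) (𝓝[>] (0:ℝ)) (𝓝 (c ^ (1-α))) := by
      have h1 := ((hψ_rv c hc).inv₀ hcα.ne').const_mul c
      have h2 : c * (c^α)⁻¹ = c ^ (1-α) := by
        rw [Real.rpow_sub hc, Real.rpow_one, div_eq_mul_inv]
      rwa [h2] at h1
    have hev : ∀ᶠ u in 𝓝[>] (0:ℝ), |c * (ψ (c*u)/ψ u)⁻¹ - c^(1-α)| ≤ ε := by
      filter_upwards [Metric.tendsto_nhds.mp hrat ε hε] with u hu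
      rw [Real.dist_eq] at hu
      exact hu.le
    have hpt : ∀ᶠ u in 𝓝[>] (0:ℝ), |c * g (c*u) - c^(1-α) * g u| ≤ ε * g u := by
      filter_upwards [hev, self_mem_nhdsWithin] with u hu hu0
      have hu0' : (0:ℝ) < u := hu0
      have hcu : 0 < c*u := mul_pos hc hu0'
      have hψu := hψ_neg u hu0'
      have hψcu := hψ_neg _ hcu
      have hgu : 0 < g u := hg_pos u hu0'
      have hkey2 : (ψ (c*u)/ψ u)⁻¹ * g u = g (c*u) := by
        simp only [hg_def]
        field_simp [hψu.ne, hψcu.ne]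
      have hrw : c * g (c*u) - c^(1-α) * g u
          = (c * (ψ (c*u)/ψ u)⁻¹ - c^(1-α)) * g u := by
        rw [sub_mul, mul_assoc, hkey2]
      rw [hrw, abs_mul, abs_of_pos hgu]
      exact mul_le_mul_of_nonneg_right hu hgu.le
    obtain ⟨δ, hδ0, hδ⟩ := mem_nhdsGT_iff_exists_Ioo_subset.mp hpt
    have hδ0' : (0:ℝ) < δ := hδ0
    set δ' := min δ (min 1 (1/c)) with hδ'
    have hδ'0 : 0 < δ' := lt_min hδ0' (lt_min one_pos (by positivity))
    filter_upwards [Ioo_mem_nhdsGT_of_mem (Set.left_mem_Ico.mpr hδ'0)] with w hw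
    have hw0 : 0 < w := hw.1
    have hw1 : w ≤ 1 := hw.2.le.trans ((min_le_right _ _).trans (min_le_left _ _))
    have hwc : c*w ≤ 1 := by
      have hwc' : w ≤ 1/c := hw.2.le.trans ((min_le_right _ _).trans (min_le_right _ _))
      calc c*w ≤ c*(1/c) := mul_le_mul_of_nonneg_left hwc' hc.le
        _ = 1 := by field_simp
    have hwδ : w < δ := lt_of_lt_of_le hw.2 (min_le_left _ _)
    have hcw0 : 0 < c*w := mul_pos hc hw0
    have I1 : IntegrableOn g (Ioo 0 w) := hgint w hw0 hw1
    have I2 : IntegrableOn g (Ioo 0 (c*w)) := hgint _ hcw0 hwc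
    have I3 : IntegrableOn (fun u => g (c*u)) (Ioo 0 w) := by
      have h2 : IntervalIntegrable g volume 0 (c*w) :=
        (intervalIntegrable_iff_integrableOn_Ioo_of_le hcw0.le).2 I2
      have h3 := h2.comp_mul_left (c := c)
      rw [zero_div, mul_div_cancel_left₀ _ hc.ne'] at h3
      exact (intervalIntegrable_iff_integrableOn_Ioo_of_le hw0.le).1 h3
    have hscale : Φ (c*w) = ∫ u in Ioo 0 w, c * g (c*u) := by
      have h1 : Φ (c*w) = ∫ x in (0:ℝ)..(c*w), g x := by
        rw [hΦ' _ hcw0, intervalIntegral.integral_of_le hcw0.le, integral_Ioc_eq_integral_Ioo]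
      have h2 := intervalIntegral.smul_integral_comp_mul_left (f := g) (a := (0:ℝ)) (b := w) c
      rw [mul_zero] at h2
      rw [h1, ← h2, intervalIntegral.integral_of_le hw0.le, integral_Ioc_eq_integral_Ioo,
        smul_eq_mul, ← integral_const_mul]
    have hsub : Φ (c*w) - c^(1-α) * Φ w
        = ∫ u in Ioo 0 w, (c * g (c*u) - c^(1-α) * g u) := by
      rw [hscale, hΦ' w hw0, ← integral_const_mul,
        ← integral_sub (I3.const_mul c) (I1.const_mul _)]
    rw [hsub]
    have habs : |∫ u in Ioo 0 w, (c * g (c*u) - c^(1-α) * g u)|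
        ≤ ∫ u in Ioo 0 w, |c * g (c*u) - c^(1-α) * g u| := by
      simpa [Real.norm_eq_abs] using
        norm_integral_le_integral_norm (μ := volume.restrict (Ioo 0 w))
          (f := fun u => c * g (c*u) - c^(1-α) * g u)
    refine habs.trans ?_
    have hmono2 : (∫ u in Ioo 0 w, |c * g (c*u) - c^(1-α) * g u|)
        ≤ ∫ u in Ioo 0 w, ε * g u := by
      refine setIntegral_mono_on ((I3.const_mul c).sub (I1.const_mul _)).abs
        (I1.const_mul ε) measurableSet_Ioo ?_
      intro u hu
      exact hδ ⟨hu.1, lt_trans hu.2 hwδ⟩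
    refine hmono2.trans (le_of_eq ?_)
    rw [integral_const_mul, ← hΦ' w hw0]
  -- main part
  intro t ht
  have hL : 0 < t ^ (1/(1-α)) := Real.rpow_pos_of_pos ht _
  set L := t ^ (1/(1-α)) with hLdef
  have hLpow : L ^ (1-α) = t := by
    rw [hLdef, ← Real.rpow_mul ht.le, one_div, inv_mul_cancel₀ h1α.ne', Real.rpow_one]
  obtain ⟨δv, hδv0, hδv⟩ := mem_nhdsGT_iff_exists_Ioo_subset.mp hv
  have hδv0' : (0:ℝ) < δv := hδv0
  have hΦt : Tendsto (fun w => t * Φ w) (𝓝[>] (0:ℝ)) (𝓝 0) := by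
    simpa using hΦ0.const_mul t
  have hE : ∀ᶠ w in 𝓝[>] (0:ℝ), 0 < w ∧ w < 1 ∧ 0 < t * Φ w ∧ t * Φ w < δv := by
    have h1 : ∀ᶠ w in 𝓝[>] (0:ℝ), t * Φ w < δv := by
      filter_upwards [hΦt.eventually (Iio_mem_nhds hδv0')] with w hw using hw
    filter_upwards [h1, Ioo_mem_nhdsGT_of_mem (Set.left_mem_Ico.mpr one_pos)] with w h1w h2w
    have hΦw : 0 < Φ w := hΦ_pos w h2w.1 (hgint w h2w.1 h2w.2.le)
    exact ⟨h2w.1, h2w.2, mul_pos ht hΦw, h1w⟩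
  have upper : ∀ c : ℝ, 0 < c → t < c ^ (1-α) →
      ∀ᶠ w in 𝓝[>] (0:ℝ), v (t * Φ w) < c * w := by
    intro c hc hct
    have hε : 0 < (c^(1-α) - t)/2 := by linarith
    filter_upwards [key c hc _ hε, hE] with w hkey hw
    obtain ⟨hw0, hw1, hs0, hsδ⟩ := hw
    obtain ⟨hv0, hvΦ⟩ := hδv ⟨hs0, hsδ⟩
    have hΦw : 0 < Φ w := hΦ_pos w hw0 (hgint w hw0 hw1.le)
    have h2 : t * Φ w < Φ (c*w) := by
      have h3 := (abs_le.mp hkey).1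
      nlinarith
    by_contra hcon
    push_neg at hcon
    by_cases hI : IntegrableOn g (Ioo 0 (v (t*Φ w)))
    · have h4 := hΦ_le (c*w) _ (mul_pos hc hw0) hcon hI
      rw [hvΦ] at h4
      linarith
    · have h4 := hΦ_undef _ hv0 hI
      rw [hvΦ] at h4
      linarith
  have lower : ∀ c : ℝ, 0 < c → c ^ (1-α) < t →
      ∀ᶠ w in 𝓝[>] (0:ℝ), c * w < v (t * Φ w) := by
    intro c hc hct
    have hε : 0 < (t - c^(1-α))/2 := by linarith
    have hsmall : ∀ᶠ w in 𝓝[>] (0:ℝ), c * w < 1 := by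
      have htc : Tendsto (fun w : ℝ => c * w) (𝓝[>] (0:ℝ)) (𝓝 0) := by
        have h0 : Tendsto (fun w : ℝ => c * w) (𝓝 (0:ℝ)) (𝓝 (c * 0)) :=
          (continuous_const.mul continuous_id).tendsto 0
        rw [mul_zero] at h0
        exact h0.mono_left nhdsWithin_le_nhds
      filter_upwards [htc.eventually (Iio_mem_nhds one_pos)] with w hw using hw
    filter_upwards [key c hc _ hε, hE, hsmall] with w hkey hw hcw1
    obtain ⟨hw0, hw1, hs0, hsδ⟩ := hw
    obtain ⟨hv0, hvΦ⟩ := hδv ⟨hs0, hsδ⟩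
    have hΦw : 0 < Φ w := hΦ_pos w hw0 (hgint w hw0 hw1.le)
    have h2 : Φ (c*w) < t * Φ w := by
      have h3 := (abs_le.mp hkey).2
      nlinarith
    by_contra hcon
    push_neg at hcon
    have h4 := hΦ_le _ (c*w) hv0 hcon (hgint _ (mul_pos hc hw0) hcw1.le)
    rw [hvΦ] at h4
    linarith
  have hmain : Tendsto (fun w => v (t * Φ w) / w) (𝓝[>] (0:ℝ)) (𝓝 L) := by
    rw [tendsto_order]
    constructor
    · intro b hb
      rcases le_or_gt b 0 with hb0 | hb0
      · filter_upwards [hE] with w hw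
        obtain ⟨hw0, hw1, hs0, hsδ⟩ := hw
        obtain ⟨hv0, _⟩ := hδv ⟨hs0, hsδ⟩
        have : 0 < v (t*Φ w)/w := div_pos hv0 hw0
        linarith
      · have hcb : b < (b+L)/2 := by linarith
        have hcL : (b+L)/2 < L := by linarith
        have hc0 : 0 < (b+L)/2 := by linarith
        have hct : ((b+L)/2) ^ (1-α) < t := by
          have h1 : ((b+L)/2)^(1-α) < L^(1-α) := Real.rpow_lt_rpow hc0.le hcL h1α
          rwa [hLpow] at h1
        filter_upwards [lower _ hc0 hct, hE] with w hlow hw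
        have hw0 := hw.1
        rw [lt_div_iff₀ hw0]
        nlinarith
    · intro b hb
      have hLc : L < (L+b)/2 := by linarith
      have hcb : (L+b)/2 < b := by linarith
      have hc0 : 0 < (L+b)/2 := by linarith
      have hct : t < ((L+b)/2) ^ (1-α) := by
        have h1 : L^(1-α) < ((L+b)/2)^(1-α) := Real.rpow_lt_rpow hL.le hLc h1α
        rwa [hLpow] at h1
      filter_upwards [upper _ hc0 hct, hE] with w hup hw
      have hw0 := hw.1
      rw [div_lt_iff₀ hw0]
      nlinarith
  have hinv : Tendsto (fun x : ℝ => 1/x) atTop (𝓝[>] (0:ℝ)) := by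
    rw [tendsto_nhdsWithin_iff]
    constructor
    · simpa only [one_div] using tendsto_inv_atTop_zero
    · filter_upwards [eventually_gt_atTop (0:ℝ)] with x hx
      exact mem_Ioi.mpr (by positivity)
  have h1 : Tendsto (fun x => x * v (t * Φ (1 / x))) atTop (𝓝 L) := by
    refine Tendsto.congr' ?_ (hmain.comp hinv)
    filter_upwards [eventually_gt_atTop (0:ℝ)] with x hx
    simp only [Function.comp_apply]
    rw [one_div, div_inv_eq_mul, mul_comm]
  exact ⟨h1, (Real.continuous_exp.tendsto (-L)).comp h1.neg⟩
end
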